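/- arXiv:1403.3389 — 7 statements merged into one kernel-verified Lean document; each statement's English description precedes it below -/
import Mathlib

section
/- Let X₁,...,Xₙ be compact metric spaces and c : X₁ × ⋯ × Xₙ → ℝ a continuous cost function that is continuously differentiable with respect to its first variable (X₁ a compact subset of ℝᵈ). Let S ⊆ X₁ × ⋯ × Xₙ be a compact c-splitting set. If c is locally 1-twisted on S (i.e., for every point (x̄₁,...,x̄ₙ) ∈ S there is a neighborhood U of (x̄₁,...,x̄ₙ) such that no other point (x̄₁, x₂,...,xₙ) ∈ S ∩ U with the same first coordinate satisfies D₁c(x̄₁,x₂,...,xₙ) = D₁c(x̄₁,x̄₂,...,x̄ₙ)), then for every (x̄₁,...,x̄ₙ) ∈ S the set {(x̄₁,x₂,...,xₙ) ∈ S : D₁c(x̄₁,x₂,...,xₙ) = D₁c(x̄₁,x̄₂,...,x̄ₙ)} is finite. -/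
open MeasureTheory Set

/-- For a cost `c` continuously differentiable in its first variable
(`X₁` a compact subset of `ℝᵈ`, the remaining marginal spaces `Y i` compact metric),
if `S` is a compact `c`-splitting set and `c` is locally `1`-twisted on `S`, then
for every point of `S` the level set of `D₁ c` within `S` over the same first
coordinate is finite. -/
theorem stmt_0 {d n : ℕ} {Y : Fin n → Type*}
    [∀ i, MetricSpace (Y i)] [∀ i, CompactSpace (Y i)]
    [∀ i, MeasurableSpace (Y i)] [∀ i, BorelSpace (Y i)]
    (X₁ : Set (EuclideanSpace ℝ (Fin d))) (hX₁ : IsCompact X₁)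
    (c : EuclideanSpace ℝ (Fin d) → (∀ i, Y i) → ℝ)
    (hc : Continuous fun p : EuclideanSpace ℝ (Fin d) × (∀ i, Y i) => c p.1 p.2)
    (D₁c : EuclideanSpace ℝ (Fin d) → (∀ i, Y i) → (EuclideanSpace ℝ (Fin d) →L[ℝ] ℝ))
    (hD : ∀ x y, HasFDerivAt (fun x' => c x' y) (D₁c x y) x)
    (hD₁cont : Continuous fun p : EuclideanSpace ℝ (Fin d) × (∀ i, Y i) => D₁c p.1 p.2)
    (S : Set (EuclideanSpace ℝ (Fin d) × (∀ i, Y i)))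
    (hS : IsCompact S) (hSX : ∀ p ∈ S, p.1 ∈ X₁)
    -- `S` is a `c`-splitting set:
    (u₀ : EuclideanSpace ℝ (Fin d) → ℝ) (u : ∀ i, Y i → ℝ)
    (hu₀ : Measurable u₀) (hu : ∀ i, Measurable (u i))
    (hsplit_le : ∀ x y, u₀ x + ∑ i, u i (y i) ≤ c x y)
    (hsplit_eq : ∀ p ∈ S, u₀ p.1 + ∑ i, u i (p.2 i) = c p.1 p.2)
    -- `c` is locally 1-twisted on `S`:
    (htwist : ∀ p ∈ S, ∃ U ∈ nhds p, ∀ y, (p.1, y) ∈ S ∩ U →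
      D₁c p.1 y = D₁c p.1 p.2 → y = p.2) :
    ∀ p ∈ S, {y : ∀ i, Y i | (p.1, y) ∈ S ∧ D₁c p.1 y = D₁c p.1 p.2}.Finite := by
  intro p hp
  set T : Set (∀ i, Y i) :=
    {y : ∀ i, Y i | (p.1, y) ∈ S ∧ D₁c p.1 y = D₁c p.1 p.2} with hT
  have hcont : Continuous fun y : ∀ i, Y i => (p.1, y) := by fun_prop
  have hTclosed : IsClosed T := by
    have h1 : IsClosed {y : ∀ i, Y i | (p.1, y) ∈ S} :=
      hS.isClosed.preimage hcont
    have h2 : IsClosed {y : ∀ i, Y i | D₁c p.1 y = D₁c p.1 p.2} :=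
      isClosed_eq (hD₁cont.comp hcont) continuous_const
    exact h1.inter h2
  have hTcompact : IsCompact T := hTclosed.isCompact
  refine hTcompact.finite ?_
  rw [isDiscrete_iff_discreteTopology, discreteTopology_subtype_iff]
  intro y hyT
  obtain ⟨U, hU, hUtw⟩ := htwist (p.1, y) hyT.1
  have hV : {y' : ∀ i, Y i | (p.1, y') ∈ U} ∈ nhds y := hcont.continuousAt.preimage_mem_nhds hU
  rw [← Filter.empty_mem_iff_bot]
  rw [Filter.mem_inf_principal]
  filter_upwards [nhdsWithin_le_nhds hV, self_mem_nhdsWithin] with y' hy' hne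
  intro hy'T
  exact hne (hUtw y' ⟨hy'T.1, hy'⟩ (hy'T.2.trans hyT.2.symm))
end

section
/- Let X₁ be a Polish space with a non-atomic Borel probability measure μ₁, and let Y be a Polish space with γ a Borel probability measure on X₁ × Y whose first marginal is μ₁. Then there exists a Borel measurable bijection (mod null sets) T = (T₁, T₂) : X₁ → X₁ × Y which is a measure-space isomorphism from (X₁, μ₁) onto (X₁ × Y, γ); moreover T₁ pushes μ₁ forward to μ₁ and T₂ pushes μ₁ forward to the second marginal of γ. -/
open MeasureTheory Set Filter Topology ProbabilityTheory


noncomputable def unif : Measure ℝ := volume.restrict (Set.Ioo (0:ℝ) 1)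

instance : IsProbabilityMeasure unif :=
  ⟨by simp [unif, Real.volume_Ioo]⟩

lemma real_iso (ν : Measure ℝ) [IsProbabilityMeasure ν] (hna : ∀ x : ℝ, ν {x} = 0) :
    ∃ (F G : ℝ → ℝ), Measurable F ∧ Measurable G ∧
      Measure.map G unif = ν ∧
      Measure.map F ν = unif ∧
      (∀ᵐ p ∂unif, F (G p) = p) ∧
      (∀ᵐ x ∂ν, G (F x) = x) := by
  set F : ℝ → ℝ := (cdf ν : ℝ → ℝ) with hFdef
  have hFmono : Monotone F := monotone_cdf ν
  have hFmeas : Measurable F := hFmono.measurable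
  set G₀ : ℝ → ℝ := fun p => sInf {x | p ≤ F x} with hG₀def
  -- basic facts
  have h1 : ∀ p : ℝ, p < 1 → {x | p ≤ F x}.Nonempty := by
    intro p hp
    have := (tendsto_cdf_atTop ν).eventually_const_le hp
    exact this.exists
  have h2 : ∀ p : ℝ, 0 < p → BddBelow {x | p ≤ F x} := by
    intro p hp
    obtain ⟨x₀, hx₀⟩ := ((tendsto_cdf_atBot ν).eventually_lt_const hp).exists
    refine ⟨x₀, fun y hy => ?_⟩
    by_contra hxy
    push_neg at hxy
    exact absurd (le_trans hy (hFmono hxy.le)) (not_le.2 hx₀)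
  have h3 : ∀ p ∈ Set.Ioo (0:ℝ) 1, p ≤ F (G₀ p) := by
    rintro p ⟨hp0, hp1⟩
    have hev : ∀ᶠ y in 𝓝[>] (G₀ p), p ≤ F y := by
      filter_upwards [self_mem_nhdsWithin] with y hy
      obtain ⟨x, hx, hxy⟩ := exists_lt_of_csInf_lt (h1 p hp1) hy
      exact le_trans hx (hFmono hxy.le)
    have htend : Tendsto F (𝓝[>] (G₀ p)) (𝓝 (F (G₀ p))) :=
      ((cdf ν).right_continuous (G₀ p)).tendsto.mono_left
        (nhdsWithin_mono _ Set.Ioi_subset_Ici_self)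
    exact ge_of_tendsto htend hev
  have h4 : ∀ x : ℝ, Function.leftLim F x = F x := by
    intro x
    have hm := (cdf ν).measure_singleton x
    rw [measure_cdf, hna x] at hm
    have h0 : F x - Function.leftLim F x ≤ 0 := by
      by_contra hc
      push_neg at hc
      rw [eq_comm, ENNReal.ofReal_eq_zero] at hm
      exact absurd hm (not_le.2 hc)
    have hle : Function.leftLim F x ≤ F x := hFmono.leftLim_le le_rfl
    linarith
  have h5 : ∀ p ∈ Set.Ioo (0:ℝ) 1, F (G₀ p) ≤ p := by
    rintro p ⟨hp0, hp1⟩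
    by_contra hc
    push_neg at hc
    rw [← h4 (G₀ p)] at hc
    have htend := hFmono.tendsto_leftLim (G₀ p)
    have hev : ∀ᶠ y in 𝓝[<] (G₀ p), p < F y := htend.eventually (eventually_gt_nhds hc)
    obtain ⟨y, hy1, hy2⟩ := (hev.and self_mem_nhdsWithin).exists
    exact absurd (csInf_le (h2 p hp0) hy1.le) (not_le.2 hy2)
  have h6 : ∀ p ∈ Set.Ioo (0:ℝ) 1, ∀ x : ℝ, (G₀ p ≤ x ↔ p ≤ F x) := by
    intro p hp x
    constructor
    · intro h
      exact le_trans (h3 p hp) (hFmono h)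
    · intro h
      exact csInf_le (h2 p hp.1) h
  -- measurable version of G₀
  have hmono : MonotoneOn G₀ (Set.Ioo (0:ℝ) 1) := by
    intro p hp q hq hpq
    exact csInf_le_csInf (h2 p hp.1) (h1 q hq.2) (fun x hx => le_trans hpq hx)
  have hGae : AEMeasurable G₀ unif :=
    aemeasurable_restrict_of_monotoneOn measurableSet_Ioo hmono
  set G : ℝ → ℝ := hGae.mk G₀ with hGdef
  have hGmeas : Measurable G := hGae.measurable_mk
  have hGG : G₀ =ᵐ[unif] G := hGae.ae_eq_mk
  have hmem : ∀ᵐ p ∂unif, p ∈ Set.Ioo (0:ℝ) 1 := ae_restrict_mem measurableSet_Ioo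
  -- map G unif = ν
  have hmap : Measure.map G unif = ν := by
    have : IsProbabilityMeasure (Measure.map G unif) :=
      Measure.isProbabilityMeasure_map hGmeas.aemeasurable
    refine Measure.ext_of_Iic _ _ (fun x => ?_)
    rw [Measure.map_apply hGmeas measurableSet_Iic]
    have hsets : (G ⁻¹' Set.Iic x : Set ℝ) =ᵐ[unif] Set.Iic (F x) := by
      rw [Filter.eventuallyEq_set]
      filter_upwards [hGG, hmem] with p hpG hp
      simp only [Set.mem_preimage, Set.mem_Iic]
      rw [← hpG]
      exact h6 p hp x
    rw [measure_congr hsets]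
    have hF0 : 0 ≤ F x := cdf_nonneg ν x
    have hF1 : F x ≤ 1 := cdf_le_one ν x
    rw [show (unif (Set.Iic (F x))) = volume (Set.Iic (F x) ∩ Set.Ioo 0 1) from
      Measure.restrict_apply measurableSet_Iic, ← ofReal_cdf ν x]
    rcases lt_or_eq_of_le hF1 with h | h
    · have : Set.Iic (F x) ∩ Set.Ioo 0 1 = Set.Ioc 0 (F x) := by
        ext y
        simp only [Set.mem_inter_iff, Set.mem_Iic, Set.mem_Ioo, Set.mem_Ioc]
        constructor
        · rintro ⟨hy1, hy2, _⟩; exact ⟨hy2, hy1⟩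
        · rintro ⟨hy1, hy2⟩; exact ⟨hy2, hy1, lt_of_le_of_lt hy2 h⟩
      rw [this, Real.volume_Ioc, sub_zero]
    · have : Set.Iic (F x) ∩ Set.Ioo 0 1 = Set.Ioo 0 1 := by
        rw [Set.inter_eq_right]
        intro y hy
        rw [← h] at hy
        exact Set.mem_Iic.2 hy.2.le
      rw [this, Real.volume_Ioo, sub_zero, ← h]
  -- F ∘ G = id a.e.
  have hFG : ∀ᵐ p ∂unif, F (G p) = p := by
    filter_upwards [hGG, hmem] with p hpG hp
    rw [← hpG]
    exact le_antisymm (h5 p hp) (h3 p hp)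
  -- map F ν = unif
  have hmapF : Measure.map F ν = unif := by
    rw [← hmap, Measure.map_map hFmeas hGmeas]
    rw [Measure.map_congr (μ := unif) (f := F ∘ G) (g := id) hFG, Measure.map_id]
  -- G ∘ F = id a.e.
  have hGF : ∀ᵐ x ∂ν, G (F x) = x := by
    rw [← hmap]
    have hset : MeasurableSet {x : ℝ | G (F x) = x} :=
      measurableSet_eq_fun (hGmeas.comp hFmeas) measurable_id
    rw [ae_map_iff hGmeas.aemeasurable hset]
    filter_upwards [hFG] with p hp
    simp only [Set.mem_setOf_eq, hp]
  exact ⟨F, G, hFmeas, hGmeas, hmap, hmapF, hFG, hGF⟩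

lemma std_iso (Z : Type*) [MeasurableSpace Z] [StandardBorelSpace Z]
    (ν : Measure Z) [IsProbabilityMeasure ν] (hna : ∀ z : Z, ν {z} = 0) :
    ∃ (g : Z → ℝ) (h : ℝ → Z), Measurable g ∧ Measurable h ∧
      Measure.map g ν = unif ∧
      Measure.map h unif = ν ∧
      (∀ᵐ z ∂ν, h (g z) = z) ∧
      (∀ᵐ p ∂unif, g (h p) = p) := by
  have hZ : Nonempty Z := by
    by_contra hc
    rw [not_nonempty_iff] at hc
    have : ν Set.univ = 1 := measure_univ
    rw [Set.univ_eq_empty_iff.2 hc, measure_empty] at this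
    exact zero_ne_one this
  set e : Z → ℝ := embeddingReal Z with hedef
  have he : MeasurableEmbedding e := measurableEmbedding_embeddingReal Z
  set ν' : Measure ℝ := Measure.map e ν with hν'def
  have : IsProbabilityMeasure ν' := Measure.isProbabilityMeasure_map he.measurable.aemeasurable
  have hna' : ∀ t : ℝ, ν' {t} = 0 := by
    intro t
    rw [hν'def, Measure.map_apply he.measurable (measurableSet_singleton t)]
    by_cases ht : ∃ z, e z = t
    · obtain ⟨z, rfl⟩ := ht
      have : e ⁻¹' {e z} = {z} := by
        ext w
        simp only [Set.mem_preimage, Set.mem_singleton_iff]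
        exact ⟨fun h => he.injective h, fun h => by rw [h]⟩
      rw [this]; exact hna z
    · have : e ⁻¹' {t} = ∅ := by
        ext w; simp only [Set.mem_preimage, Set.mem_singleton_iff, Set.mem_empty_iff_false,
          iff_false]
        exact fun h => ht ⟨w, h⟩
      rw [this, measure_empty]
  obtain ⟨F, G, hF, hG, hmapG, hmapF, hFG, hGF⟩ := real_iso ν' hna'
  obtain ⟨einv, heinv, heinvid⟩ := he.exists_measurable_extend measurable_id (fun _ => hZ)
  have heinvid' : ∀ z, einv (e z) = z := fun z => congr_fun heinvid z
  refine ⟨F ∘ e, einv ∘ G, hF.comp he.measurable, heinv.comp hG, ?_, ?_, ?_, ?_⟩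
  · rw [← Measure.map_map hF he.measurable, ← hν'def, hmapF]
  · rw [← Measure.map_map heinv hG, hmapG, hν'def, Measure.map_map heinv he.measurable,
      heinvid, Measure.map_id]
  · -- a.e. ν, einv (G (F (e z))) = z
    have hae : ∀ᵐ t ∂ν', G (F t) = t := hGF
    rw [hν'def, ae_map_iff he.measurable.aemeasurable
      (measurableSet_eq_fun (f := fun t => G (F t)) (g := fun t : ℝ => t) (hG.comp hF) measurable_id)] at hae
    filter_upwards [hae] with z hz
    simp only [Function.comp_apply]
    rw [hz, heinvid' z]
  · -- a.e. unif, F (e (einv (G p))) = p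
    have hrange : ∀ᵐ p ∂unif, G p ∈ Set.range e := by
      have hmeas : MeasurableSet (Set.range e) := he.measurableSet_range
      have h1 : (Measure.map G unif) (Set.range e)ᶜ = 0 := by
        rw [hmapG, hν'def, Measure.map_apply he.measurable hmeas.compl]
        have : e ⁻¹' (Set.range e)ᶜ = ∅ := by
          ext w; simp [Set.mem_range]
        rw [this, measure_empty]
      rw [Measure.map_apply hG hmeas.compl] at h1
      exact h1
    filter_upwards [hrange, hFG] with p hp hfp
    simp only [Function.comp_apply]
    obtain ⟨z, hz⟩ := hp
    rw [← hz, heinvid' z, hz, hfp]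

/-- If `μ₁` is a non-atomic Borel probability measure on a Polish space `X₁`
and `γ` is a Borel probability measure on `X₁ × Y` (with `Y` Polish) whose first marginal
is `μ₁`, then there is a measure-space isomorphism (a Borel bijection mod null sets)
`T = (T₁, T₂) : X₁ → X₁ × Y` pushing `μ₁` to `γ`; moreover `T₁` pushes `μ₁` to `μ₁`
and `T₂` pushes `μ₁` to the second marginal of `γ`. -/
theorem stmt_2 {X₁ Y : Type*}
    [MetricSpace X₁] [PolishSpace X₁] [MeasurableSpace X₁] [BorelSpace X₁]
    [MetricSpace Y] [PolishSpace Y] [MeasurableSpace Y] [BorelSpace Y]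
    (μ₁ : Measure X₁) [IsProbabilityMeasure μ₁] (hna : ∀ x : X₁, μ₁ {x} = 0)
    (γ : Measure (X₁ × Y)) [IsProbabilityMeasure γ]
    (hmarg : Measure.map Prod.fst γ = μ₁) :
    ∃ (T₁ : X₁ → X₁) (T₂ : X₁ → Y) (F : X₁ × Y → X₁),
      Measurable T₁ ∧ Measurable T₂ ∧ Measurable F ∧
      Measure.map (fun x => (T₁ x, T₂ x)) μ₁ = γ ∧
      (∀ᵐ x ∂μ₁, F (T₁ x, T₂ x) = x) ∧
      (∀ᵐ p ∂γ, (T₁ (F p), T₂ (F p)) = p) ∧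
      Measure.map T₁ μ₁ = μ₁ ∧
      Measure.map T₂ μ₁ = Measure.map Prod.snd γ := by
  have hγna : ∀ p : X₁ × Y, γ {p} = 0 := by
    intro p
    have h1 : γ {p} ≤ γ (Prod.fst ⁻¹' {p.1}) := by
      refine measure_mono (fun q hq => ?_)
      rw [Set.mem_singleton_iff] at hq
      simp [hq]
    have h2 : γ (Prod.fst ⁻¹' {p.1}) = μ₁ {p.1} := by
      rw [← hmarg, Measure.map_apply measurable_fst (measurableSet_singleton _)]
    exact le_antisymm (h1.trans (by rw [h2, hna])) zero_le
  obtain ⟨gX, hX, hgX, hhX, hmapgX, hmaphX, hXinv, hXinv2⟩ := std_iso X₁ μ₁ hna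
  obtain ⟨gP, hP, hgP, hhP, hmapgP, hmaphP, hPinv, hPinv2⟩ := std_iso (X₁ × Y) γ hγna
  have hT : Measurable (fun x => hP (gX x)) := hhP.comp hgX
  have hmapT : Measure.map (fun x => hP (gX x)) μ₁ = γ := by
    rw [show (fun x => hP (gX x)) = hP ∘ gX from rfl, ← Measure.map_map hhP hgX,
      hmapgX, hmaphP]
  refine ⟨fun x => (hP (gX x)).1, fun x => (hP (gX x)).2, fun p => hX (gP p),
    measurable_fst.comp hT, measurable_snd.comp hT, hhX.comp hgP, ?_, ?_, ?_, ?_, ?_⟩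
  · simpa only [Prod.mk.eta] using hmapT
  · -- ∀ᵐ x ∂μ₁, hX (gP ((hP (gX x)).1, (hP (gX x)).2)) = x
    have hae : ∀ᵐ q ∂(Measure.map gX μ₁), gP (hP q) = q := by rw [hmapgX]; exact hPinv2
    rw [ae_map_iff hgX.aemeasurable
      (measurableSet_eq_fun (f := fun q => gP (hP q)) (g := fun q : ℝ => q)
        (hgP.comp hhP) measurable_id)] at hae
    filter_upwards [hae, hXinv] with x h1 h2
    simp only [Prod.mk.eta]
    rw [h1, h2]
  · -- ∀ᵐ p ∂γ, hP (gX (hX (gP p))) = p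
    have hae : ∀ᵐ q ∂(Measure.map gP γ), gX (hX q) = q := by rw [hmapgP]; exact hXinv2
    rw [ae_map_iff hgP.aemeasurable
      (measurableSet_eq_fun (f := fun q => gX (hX q)) (g := fun q : ℝ => q)
        (hgX.comp hhX) measurable_id)] at hae
    filter_upwards [hae, hPinv] with p h1 h2
    simp only [Prod.mk.eta]
    rw [h1, h2]
  · rw [show (fun x => (hP (gX x)).1) = Prod.fst ∘ (fun x => hP (gX x)) from rfl,
      ← Measure.map_map measurable_fst hT, hmapT, hmarg]
  · rw [show (fun x => (hP (gX x)).2) = Prod.snd ∘ (fun x => hP (gX x)) from rfl,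
      ← Measure.map_map measurable_snd hT, hmapT]
end

section
/- Let (Y, Σ, ν) be a probability space, X a Hausdorff topological space with a Radon probability measure λ, and T : X → Y a surjective Borel-to-Σ measurable map with T_#λ = ν. Suppose Σ is countably separated. If there exists a Σ_ν-to-Borel measurable section F : Y → X of T (i.e., T ∘ F = id_Y) with λ = F_#ν, then λ is an extreme point of the convex set M(T, ν) = {ρ Radon probability on X : T_#ρ = ν}. -/
open MeasureTheory

/-- Graf, one direction: if a `Σ_ν`-to-Borel measurable section `F` of `T`
pushes `ν` to `λ`, then `λ` is an extreme point of `M(T, ν)`, the convex set of Radon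
probability measures on `X` pushed by `T` to `ν`.  Here `Σ` is countably separated,
`X` is Hausdorff and `lam` is a Radon (inner regular, finite) probability measure. -/
theorem stmt_3 {X Y : Type*} [TopologicalSpace X] [T2Space X]
    [MeasurableSpace X] [BorelSpace X] [MeasurableSpace Y]
    (ν : Measure Y) [IsProbabilityMeasure ν]
    (lam : Measure X) [IsProbabilityMeasure lam] [lam.InnerRegular]
    (T : X → Y) (hT : Measurable T) (hTsurj : Function.Surjective T)
    (hTν : Measure.map T lam = ν)
    -- `Σ` is countably separated:
    (hsep : ∃ s : ℕ → Set Y, (∀ n, MeasurableSet (s n)) ∧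
      ∀ y₁ y₂ : Y, (∀ n, y₁ ∈ s n ↔ y₂ ∈ s n) → y₁ = y₂)
    -- a `Σ_ν`-to-Borel measurable section `F` of `T` with `lam = F₃ν`:
    (F : Y → X)
    (hFmeas : ∀ B : Set X, MeasurableSet B → NullMeasurableSet (F ⁻¹' B) ν)
    (hFsec : ∀ y, T (F y) = y)
    (hFpush : ∀ B : Set X, MeasurableSet B → lam B = ν (F ⁻¹' B)) :
    -- `lam` is an extreme point of `M(T, ν)`:
    ∀ (θ : NNReal), 0 < θ → θ < 1 →
      ∀ lam₁ lam₂ : Measure X,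
        (IsProbabilityMeasure lam₁ ∧ lam₁.InnerRegular ∧ Measure.map T lam₁ = ν) →
        (IsProbabilityMeasure lam₂ ∧ lam₂.InnerRegular ∧ Measure.map T lam₂ = ν) →
        lam = θ • lam₁ + (1 - θ : NNReal) • lam₂ → lam₁ = lam₂ := by
  intro θ hθ0 hθ1 lam₁ lam₂ h1 h2 hsum
  obtain ⟨h1p, _, h1T⟩ := h1
  obtain ⟨h2p, _, h2T⟩ := h2
  -- any measurable set disjoint from the range of `F` is `lam`-null
  have hthick : ∀ A : Set X, MeasurableSet A → Disjoint A (Set.range F) → lam A = 0 := by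
    intro A hA hdisj
    have hpre : F ⁻¹' A = ∅ := by
      ext y
      simp only [Set.mem_preimage, Set.mem_empty_iff_false, iff_false]
      intro h
      exact hdisj.ne_of_mem h (Set.mem_range_self y) rfl
    rw [hFpush A hA, hpre, measure_empty]
  -- the key computation for any competitor measure
  have key : ∀ (μ : Measure X) (c : NNReal), c ≠ 0 → Measure.map T μ = ν →
      c • μ ≤ lam → ∀ B : Set X, MeasurableSet B →
      ∀ C : Set Y, MeasurableSet C → (F ⁻¹' B) =ᵐ[ν] C → μ B = ν C := by
    intro μ c hc hμT hμle B hB C hC hae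
    have hN0 : ν (toMeasurable ν (symmDiff (F ⁻¹' B) C)) = 0 := by
      rw [measure_toMeasurable]
      exact measure_symmDiff_eq_zero_iff.mpr hae
    set N := toMeasurable ν (symmDiff (F ⁻¹' B) C) with hNdef
    have hNmeas : MeasurableSet N := measurableSet_toMeasurable _ _
    have hμTN : μ (T ⁻¹' N) = 0 := by
      rw [← Measure.map_apply hT hNmeas, hμT]; exact hN0
    -- the measurable set `(B ∆ T⁻¹C) \ T⁻¹N` is disjoint from `range F`
    have hAmeas : MeasurableSet ((symmDiff B (T ⁻¹' C)) \ T ⁻¹' N) :=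
      ((hB.symmDiff (hT hC)).diff (hT hNmeas))
    have hdisj : Disjoint ((symmDiff B (T ⁻¹' C)) \ T ⁻¹' N) (Set.range F) := by
      rw [Set.disjoint_right]
      rintro x ⟨y, rfl⟩ ⟨hx, hxN⟩
      have hTx : T (F y) = y := hFsec y
      have hyN : y ∉ N := by rwa [Set.mem_preimage, hTx] at hxN
      have hysym : y ∉ symmDiff (F ⁻¹' B) C := fun h => hyN (subset_toMeasurable _ _ h)
      rw [Set.mem_symmDiff] at hx hysym
      push_neg at hysym
      rcases hx with ⟨hxB, hxC⟩ | ⟨hxC, hxB⟩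
      · have hyC : y ∈ C := hysym.1 hxB
        exact hxC (by rwa [Set.mem_preimage, hTx])
      · have hyC : y ∈ C := by rwa [Set.mem_preimage, hTx] at hxC
        exact hxB (hysym.2 hyC)
    have hlamA : lam ((symmDiff B (T ⁻¹' C)) \ T ⁻¹' N) = 0 := hthick _ hAmeas hdisj
    have hμA : μ ((symmDiff B (T ⁻¹' C)) \ T ⁻¹' N) = 0 := by
      have h1 : (c • μ) ((symmDiff B (T ⁻¹' C)) \ T ⁻¹' N) ≤
          lam ((symmDiff B (T ⁻¹' C)) \ T ⁻¹' N) := hμle _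
      rw [hlamA] at h1
      have h2 := nonpos_iff_eq_zero.mp h1
      simpa [smul_eq_zero, hc] using h2
    have hμsym : μ (symmDiff B (T ⁻¹' C)) = 0 := by
      have : symmDiff B (T ⁻¹' C) ⊆
          ((symmDiff B (T ⁻¹' C)) \ T ⁻¹' N) ∪ T ⁻¹' N := by
        intro x hx
        by_cases hxN : x ∈ T ⁻¹' N
        · exact Or.inr hxN
        · exact Or.inl ⟨hx, hxN⟩
      refine le_antisymm (le_trans (measure_mono this) ?_) zero_le
      calc μ (((symmDiff B (T ⁻¹' C)) \ T ⁻¹' N) ∪ T ⁻¹' N)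
          ≤ μ ((symmDiff B (T ⁻¹' C)) \ T ⁻¹' N) + μ (T ⁻¹' N) := measure_union_le _ _
        _ = 0 := by rw [hμA, hμTN, add_zero]
    have : μ B = μ (T ⁻¹' C) := measure_congr (measure_symmDiff_eq_zero_iff.mp hμsym)
    rw [this, ← hμT, Measure.map_apply hT hC]
  -- apply to both measures and conclude
  have hθ1' : (1 - θ : NNReal) ≠ 0 := by
    have : (0 : NNReal) < 1 - θ := tsub_pos_of_lt hθ1
    exact this.ne'
  have hle1 : θ • lam₁ ≤ lam := by
    rw [hsum]; exact Measure.le_add_right le_rfl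
  have hle2 : (1 - θ : NNReal) • lam₂ ≤ lam := by
    rw [hsum]; exact Measure.le_add_left le_rfl
  ext B hB
  obtain ⟨C, hCsub, hCmeas, hCae⟩ :=
    (hFmeas B hB).exists_measurable_subset_ae_eq
  have e1 := key lam₁ θ hθ0.ne' h1T hle1 B hB C hCmeas hCae.symm
  have e2 := key lam₂ (1 - θ) hθ1' h2T hle2 B hB C hCmeas hCae.symm
  rw [e1, e2]
end

section
/- Let (X, 𝓑, μ) be a probability space and ρ₁,...,ρ_k probability measures on X such that μ is absolutely continuous with respect to ρ := Σᵢ₌₁^k ρᵢ with Radon–Nikodym density α = dμ/dρ. Suppose T₁ : X → X satisfies T₁_#μ = μ and Fᵢ are sections of T₁ with ρᵢ = (Fᵢ)_#μ. Then, setting αᵢ = α ∘ Fᵢ, one has Σᵢ₌₁^k αᵢ(x) = 1 for μ-almost every x ∈ X. -/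
open MeasureTheory

/-- if `μ = ρ.withDensity α` where `ρ = ∑ ρᵢ`, `ρᵢ = (Fᵢ)₃μ` for sections
`Fᵢ` of a `μ`-preserving map `T₁`, then `∑ i, α (Fᵢ x) = 1` for `μ`-a.e. `x`. -/
theorem stmt_9 {X : Type*} [MeasurableSpace X]
    (μ : Measure X) [IsProbabilityMeasure μ]
    (k : ℕ) (ρ : Fin k → Measure X) (hρ : ∀ i, IsProbabilityMeasure (ρ i))
    (α : X → ENNReal) (hα : Measurable α)
    (hac : μ ≪ ∑ i : Fin k, ρ i)
    (hdens : μ = (∑ i : Fin k, ρ i).withDensity α)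
    (T₁ : X → X) (hT₁ : Measurable T₁) (hT₁μ : Measure.map T₁ μ = μ)
    (F : Fin k → X → X) (hFmeas : ∀ i, Measurable (F i))
    (hFsec : ∀ i x, T₁ (F i x) = x)
    (hFpush : ∀ i, ρ i = Measure.map (F i) μ) :
    ∀ᵐ x ∂μ, ∑ i : Fin k, α (F i x) = 1 := by
  have hmeas : Measurable fun x => ∑ i : Fin k, α (F i x) :=
    Finset.measurable_sum _ fun i _ => hα.comp (hFmeas i)
  have key : ∀ t : Set X, MeasurableSet t →
      ∫⁻ x in t, (∑ i : Fin k, α (F i x)) ∂μ = ∫⁻ x in t, (1 : ENNReal) ∂μ := by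
    intro t ht
    have htT : MeasurableSet (T₁ ⁻¹' t) := hT₁ ht
    rw [lintegral_finset_sum (f := fun i x => α (F i x)) _ fun i _ => hα.comp (hFmeas i)]
    have h1 : ∀ i : Fin k, ∫⁻ x in t, α (F i x) ∂μ = ∫⁻ y in T₁ ⁻¹' t, α y ∂(ρ i) := by
      intro i
      have hpre : F i ⁻¹' (T₁ ⁻¹' t) = t := by
        ext x; simp [Set.mem_preimage, hFsec i x]
      rw [hFpush i, Measure.restrict_map (hFmeas i) htT,
        lintegral_map hα (hFmeas i), hpre]
    simp_rw [h1]
    have h2 : ∀ i : Fin k, ∫⁻ y in T₁ ⁻¹' t, α y ∂(ρ i)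
        = ∫⁻ y, (T₁ ⁻¹' t).indicator α y ∂(ρ i) := fun i =>
      (lintegral_indicator htT α).symm
    simp_rw [h2]
    rw [← lintegral_finset_sum_measure, lintegral_indicator htT,
      ← withDensity_apply α htT, ← hdens]
    have : μ (T₁ ⁻¹' t) = μ t := by
      conv_rhs => rw [← hT₁μ]
      rw [Measure.map_apply hT₁ ht]
    rw [this]
    simp
  have := ae_eq_of_forall_setLIntegral_eq_of_sigmaFinite (μ := μ) hmeas measurable_const
    (fun s hs _ => key s hs)
  filter_upwards [this] with x hx using hx
end

section
/- Let X₁, Y be Polish spaces, μ₁ a Borel probability measure on X₁, and γ a probability measure on X₁ × Y with first marginal μ₁. Suppose T = (T₁, G) : X₁ → X₁ × Y pushes μ₁ forward to γ, and suppose F₁,...,F_k : X₁ → X₁ are sections of T₁ with ρᵢ = (Fᵢ)_#μ₁, μ ≪ Σρᵢ with density α, and αᵢ = α ∘ Fᵢ. Let Gᵢ = G ∘ Fᵢ : X₁ → Y. Then for every bounded continuous f : X₁ × Y → ℝ, ∫ f dγ = Σᵢ₌₁^k ∫ αᵢ(x) f(x, Gᵢ(x)) dμ₁(x); that is, γ =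 Σᵢ₌₁^k αᵢ · (Id × Gᵢ)_#μ₁ where αᵢ acts as a density on the first coordinate. -/
open MeasureTheory

theorem map_withDensity_comp {A B : Type*} [MeasurableSpace A] [MeasurableSpace B]
    (μ : Measure A) (f : A → B) (hf : Measurable f) (g : B → ENNReal) (hg : Measurable g) :
    (Measure.map f μ).withDensity g = Measure.map f (μ.withDensity (g ∘ f)) := by
  ext s hs
  rw [withDensity_apply _ hs, setLIntegral_map hs hg hf,
    Measure.map_apply hf hs, withDensity_apply _ (hf hs)]
  rfl

/-- decomposition of a coupling `γ = T₃μ₁` (with `T = (T₁, G)`) into a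
sum `γ = ∑ i, αᵢ · (Id × Gᵢ)₃μ₁` along sections `Fᵢ` of `T₁`, where `Gᵢ = G ∘ Fᵢ` and
`αᵢ = α ∘ Fᵢ` for the density `α` of `μ₁` w.r.t. `∑ (Fᵢ)₃μ₁`.  Equivalently, for every
bounded continuous `f`, `∫ f dγ = ∑ i ∫ αᵢ(x) f(x, Gᵢ x) dμ₁`. -/
theorem stmt_10 {X₁ Y : Type*}
    [MetricSpace X₁] [PolishSpace X₁] [MeasurableSpace X₁] [BorelSpace X₁]
    [MetricSpace Y] [PolishSpace Y] [MeasurableSpace Y] [BorelSpace Y]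
    (μ₁ : Measure X₁) [IsProbabilityMeasure μ₁]
    (γ : Measure (X₁ × Y)) [IsProbabilityMeasure γ]
    (hmarg : Measure.map Prod.fst γ = μ₁)
    (T₁ : X₁ → X₁) (G : X₁ → Y) (hT₁ : Measurable T₁) (hG : Measurable G)
    (hpush : Measure.map (fun x => (T₁ x, G x)) μ₁ = γ)
    (k : ℕ) (F : Fin k → X₁ → X₁) (hFmeas : ∀ i, Measurable (F i))
    (hFsec : ∀ i x, T₁ (F i x) = x)
    (ρ : Fin k → Measure X₁) (hρ : ∀ i, ρ i = Measure.map (F i) μ₁)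
    (α : X₁ → ENNReal) (hα : Measurable α)
    (hac : μ₁ ≪ ∑ i : Fin k, ρ i)
    (hdens : μ₁ = (∑ i : Fin k, ρ i).withDensity α) :
    (∀ f : X₁ × Y → ℝ, Continuous f → (∃ M, ∀ p, |f p| ≤ M) →
      ∫ p, f p ∂γ =
        ∑ i : Fin k, ∫ x, (α (F i x)).toReal * f (x, G (F i x)) ∂μ₁) ∧
    γ = ∑ i : Fin k,
      Measure.map (fun x => (x, G (F i x)))
        (μ₁.withDensity (fun x => α (F i x))) := by
  set σ : Measure X₁ := ∑ i : Fin k, ρ i with hσ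
  have hSmeas : MeasurableSet {x | α x = ⊤} := hα (measurableSet_singleton ⊤)
  have hσtop : σ {x | α x = ⊤} = 0 := by
    by_contra h
    have h1 : μ₁ {x | α x = ⊤} = ∫⁻ x in {x | α x = ⊤}, α x ∂σ := by
      conv_lhs => rw [hdens]
      rw [withDensity_apply _ hSmeas]
    have h2 : ∫⁻ x in {x | α x = ⊤}, α x ∂σ = ⊤ := by
      rw [setLIntegral_congr_fun hSmeas
        (fun x hx => hx), lintegral_const,
        Measure.restrict_apply_univ, ENNReal.top_mul h]
    have := measure_lt_top μ₁ {x | α x = ⊤}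
    rw [h1, h2] at this
    exact absurd this (by simp)
  -- α ∘ F i is a.e. finite w.r.t. μ₁
  have hfin : ∀ i : Fin k, ∀ᵐ x ∂μ₁, α (F i x) ≠ ⊤ := by
    intro i
    have hρi : ρ i {x | α x = ⊤} = 0 := by
      have hle : ρ i {x | α x = ⊤} ≤ σ {x | α x = ⊤} := by
        rw [hσ, Measure.finset_sum_apply]
        exact Finset.single_le_sum (f := fun j => ρ j {x | α x = ⊤})
          (fun _ _ => zero_le) (Finset.mem_univ i)
      exact le_antisymm (hle.trans_eq hσtop) zero_le
    have h0 : μ₁ (F i ⁻¹' {x | α x = ⊤}) = 0 := by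
      rw [hρ i, Measure.map_apply (hFmeas i) hSmeas] at hρi
      exact hρi
    filter_upwards [measure_eq_zero_iff_ae_notMem.mp h0] with x hx
    exact hx
  -- The measure identity
  have key : γ = ∑ i : Fin k,
      Measure.map (fun x => (x, G (F i x))) (μ₁.withDensity (fun x => α (F i x))) := by
    have h1 : γ = ∑ i : Fin k,
        Measure.map (fun x => (T₁ x, G x)) ((ρ i).withDensity α) := by
      rw [← hpush]
      conv_lhs => rw [hdens, hσ, ← Measure.sum_fintype, withDensity_sum]
      rw [Measure.map_sum (hT₁.prodMk hG).aemeasurable, Measure.sum_fintype]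
    rw [h1]
    refine Finset.sum_congr rfl fun i _ => ?_
    rw [hρ i, map_withDensity_comp μ₁ (F i) (hFmeas i) α hα,
      Measure.map_map (hT₁.prodMk hG) (hFmeas i)]
    have heq : ((fun x => (T₁ x, G x)) ∘ F i) = fun x => (x, G (F i x)) := by
      funext x
      simp [Function.comp, hFsec i x]
    rw [heq]
    rfl
  refine ⟨?_, key⟩
  intro f hfc ⟨M, hM⟩
  have hνfin : ∀ i : Fin k, IsFiniteMeasure
      (Measure.map (fun x => (x, G (F i x))) (μ₁.withDensity (fun x => α (F i x)))) := by
    intro i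
    constructor
    have hle : (Measure.map (fun x => (x, G (F i x)))
        (μ₁.withDensity (fun x => α (F i x)))) Set.univ ≤ γ Set.univ := by
      conv_rhs => rw [key]
      rw [Measure.finset_sum_apply]
      exact Finset.single_le_sum (f := fun j => (Measure.map (fun x => (x, G (F j x)))
        (μ₁.withDensity (fun x => α (F j x)))) Set.univ) (fun _ _ => zero_le)
        (Finset.mem_univ i)
    exact hle.trans_lt (measure_lt_top γ _)
  have hmeasmap : ∀ i : Fin k, Measurable fun x => (x, G (F i x)) := fun i =>
    measurable_id.prodMk (hG.comp (hFmeas i))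
  have hint : ∀ i : Fin k, i ∈ (Finset.univ : Finset (Fin k)) → Integrable f
      (Measure.map (fun x => (x, G (F i x))) (μ₁.withDensity (fun x => α (F i x)))) := by
    intro i _
    have := hνfin i
    exact (integrable_const M).mono' hfc.aestronglyMeasurable
      (Filter.Eventually.of_forall fun p => by
        simpa [Real.norm_eq_abs] using hM p)
  conv_lhs => rw [key]
  rw [integral_finset_sum_measure hint]
  refine Finset.sum_congr rfl fun i _ => ?_
  rw [integral_map (hmeasmap i).aemeasurable hfc.aestronglyMeasurable]
  have hcongr : μ₁.withDensity (fun x => α (F i x))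
      = μ₁.withDensity (fun x => ((α (F i x)).toNNReal : ENNReal)) :=
    withDensity_congr_ae (by
      filter_upwards [hfin i] with x hx
      rw [ENNReal.coe_toNNReal hx])
  rw [hcongr, integral_withDensity_eq_integral_smul
    (f := fun x => (α (F i x)).toNNReal)
    (ENNReal.measurable_toNNReal.comp (hα.comp (hFmeas i)))]
  refine integral_congr_ae (Filter.Eventually.of_forall fun x => ?_)
  simp [NNReal.smul_def, ENNReal.toReal]
end

section
/- Let X, Y be Polish (complete separable metric) spaces, ν a Borel probability measure on Y, T : X → Y a surjective Borel measurable map, and λ a Borel probability measure on X with T_#λ = ν. Then there exists a probability measure ξ on the σ-algebra over ext M(T,ν) generated by the evaluation maps ρ ↦ ρ(B) (B Borel in X), such that for every Borel set B ⊆ X, λ(B) = ∫_{ext M(T,ν)} ρ(B) dξ(ρ), and each map ρ ↦ ρ(B) is ξ-measurable. -/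
open MeasureTheory Set Filter ProbabilityTheory
open scoped Topology

section AuxLemmas

lemma quantile_le_iff (m : Measure ℝ) [IsProbabilityMeasure m] {u : ℝ}
    (h0 : 0 < u) (h1 : u < 1) (x : ℝ) :
    sInf {z | u ≤ (m (Set.Iic z)).toReal} ≤ x ↔ u ≤ (m (Set.Iic x)).toReal := by
  have hF : ∀ z, (m (Set.Iic z)).toReal = cdf m z := fun z => (cdf_eq_real m z).symm
  simp only [hF]
  set F := cdf m with hFdef
  set S := {z | u ≤ F z} with hS
  have hmono : Monotone F := monotone_cdf m
  have hne : S.Nonempty := ((tendsto_cdf_atTop m).eventually (eventually_ge_nhds h1)).exists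
  have hbdd : BddBelow S := by
    obtain ⟨z₀, hz₀⟩ := ((tendsto_cdf_atBot m).eventually (eventually_lt_nhds h0)).exists
    refine ⟨z₀, fun z hz => ?_⟩
    by_contra h
    push_neg at h
    exact absurd (le_trans hz (hmono h.le)) (not_le.mpr hz₀)
  constructor
  · intro hle
    refine le_trans ?_ (hmono hle)
    have hev : ∀ᶠ z in 𝓝[>] (sInf S), u ≤ F z := by
      filter_upwards [self_mem_nhdsWithin] with z hz
      obtain ⟨w, hw, hwz⟩ := exists_lt_of_csInf_lt hne hz
      exact le_trans hw (hmono hwz.le)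
    have hrc : Filter.Tendsto F (𝓝[>] (sInf S)) (𝓝 (F (sInf S))) :=
      ((F.right_continuous (sInf S)).tendsto).mono_left
        (nhdsWithin_mono _ Ioi_subset_Ici_self)
    exact ge_of_tendsto hrc hev
  · intro hx
    exact csInf_le hbdd hx

lemma map_quantile (m : Measure ℝ) [IsProbabilityMeasure m]
    (q : ℝ → ℝ) (hq : Measurable q)
    (hql : ∀ u ∈ Set.Ioo (0:ℝ) 1, ∀ x, q u ≤ x ↔ u ≤ (m (Set.Iic x)).toReal) :
    Measure.map q (volume.restrict (Set.Ioo 0 1)) = m := by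
  refine Measure.ext_of_Iic _ _ (fun x => ?_)
  rw [Measure.map_apply hq measurableSet_Iic, Measure.restrict_apply (hq measurableSet_Iic)]
  have hset : q ⁻¹' Set.Iic x ∩ Set.Ioo 0 1
      = {u : ℝ | u ∈ Set.Ioo (0:ℝ) 1 ∧ u ≤ (m (Set.Iic x)).toReal} := by
    ext u
    simp only [Set.mem_inter_iff, Set.mem_preimage, Set.mem_Iic, Set.mem_setOf_eq]
    constructor
    · rintro ⟨h1, h2⟩; exact ⟨h2, (hql u h2 x).mp h1⟩
    · rintro ⟨h1, h2⟩; exact ⟨(hql u h1 x).mpr h2, h1⟩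
  rw [hset]
  set c := (m (Set.Iic x)).toReal with hc
  have hc1 : c ≤ 1 := by
    rw [hc]
    refine ENNReal.toReal_le_of_le_ofReal one_pos.le ?_
    simpa using prob_le_one
  by_cases hcase : c < 1
  · have : {u : ℝ | u ∈ Set.Ioo (0:ℝ) 1 ∧ u ≤ c} = Set.Ioc 0 c := by
      ext u
      simp only [Set.mem_setOf_eq, Set.mem_Ioo, Set.mem_Ioc]
      exact ⟨fun ⟨⟨h1, _⟩, h3⟩ => ⟨h1, h3⟩, fun ⟨h1, h2⟩ => ⟨⟨h1, lt_of_le_of_lt h2 hcase⟩, h2⟩⟩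
    rw [this, Real.volume_Ioc, hc]
    rw [sub_zero, ENNReal.ofReal_toReal (measure_ne_top m _)]
  · have hceq : c = 1 := le_antisymm hc1 (not_lt.mp hcase)
    have : {u : ℝ | u ∈ Set.Ioo (0:ℝ) 1 ∧ u ≤ c} = Set.Ioo 0 1 := by
      ext u
      simp only [Set.mem_setOf_eq, Set.mem_Ioo, hceq]
      exact ⟨fun h => h.1, fun h => ⟨h, h.2.le⟩⟩
    rw [this, Real.volume_Ioo]
    have : m (Set.Iic x) = 1 := by
      have h2 := ENNReal.ofReal_toReal (measure_ne_top m (Set.Iic x))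
      rw [← hc, hceq] at h2
      simpa using h2.symm
    simp [this]

lemma ae_eq_one_of_lintegral_eq_one {α : Type*} [MeasurableSpace α] (μ : Measure α)
    [IsProbabilityMeasure μ] {f : α → ENNReal} (hf : Measurable f) (hle : ∀ a, f a ≤ 1)
    (h : ∫⁻ a, f a ∂μ = 1) : ∀ᵐ a ∂μ, f a = 1 := by
  have hsub : ∫⁻ a, (1 - f a) ∂μ = 0 := by
    rw [lintegral_sub hf (by rw [h]; exact ENNReal.one_ne_top) (ae_of_all _ hle)]
    simp [h]
  have h0 := (lintegral_eq_zero_iff (measurable_const.sub hf)).mp hsub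
  filter_upwards [h0] with a ha
  have : (1 : ENNReal) ≤ f a := by
    simpa [tsub_eq_zero_iff_le] using ha
  exact le_antisymm (hle a) this

lemma measurableSet_eq_fun'' {α E : Type*} [MeasurableSpace α] [MetricSpace E]
    [MeasurableSpace E] [BorelSpace E] [SecondCountableTopology E]
    {f g : α → E} (hf : Measurable f) (hg : Measurable g) :
    MeasurableSet {x | f x = g x} :=
  MeasureTheory.StronglyMeasurable.measurableSet_eq_fun hf.stronglyMeasurable hg.stronglyMeasurable

end AuxLemmas

variable {X Y : Type*} [MeasurableSpace X] [MeasurableSpace Y]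

/-- The convex set `M(T, ν)` of Borel probability measures pushed by `T` to `ν`. -/
def MTν (T : X → Y) (ν : Measure Y) : Set (Measure X) :=
  {ρ : Measure X | IsProbabilityMeasure ρ ∧ Measure.map T ρ = ν}

/-- The set of extreme points of `M(T, ν)`. -/
def extMTν (T : X → Y) (ν : Measure Y) : Set (Measure X) :=
  {ρ ∈ MTν T ν | ∀ θ : NNReal, 0 < θ → θ < 1 →
    ∀ ρ₁ ∈ MTν T ν, ∀ ρ₂ ∈ MTν T ν,
      ρ = θ • ρ₁ + (1 - θ : NNReal) • ρ₂ → ρ₁ = ρ₂}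

/-- The σ-algebra on a set `K` of measures generated by the evaluations `ρ ↦ ρ B`,
`B` measurable. -/
def evalSigma (K : Set (Measure X)) : MeasurableSpace K :=
  ⨆ (B : Set X) (_ : MeasurableSet B),
    MeasurableSpace.comap (fun ρ : K => (ρ : Measure X) B) inferInstance

/-- Choquet-type representation: every `λ ∈ M(T, ν)` is a barycenter of
a probability measure `ξ` on the extreme points of `M(T, ν)`. -/
theorem stmt_12 {X Y : Type*}
    [MetricSpace X] [PolishSpace X] [MeasurableSpace X] [BorelSpace X]
    [MetricSpace Y] [PolishSpace Y] [MeasurableSpace Y] [BorelSpace Y]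
    (ν : Measure Y) [IsProbabilityMeasure ν]
    (T : X → Y) (hT : Measurable T) (hTsurj : Function.Surjective T)
    (lam : Measure X) [IsProbabilityMeasure lam]
    (hlam : Measure.map T lam = ν) :
    ∃ ξ : @Measure (extMTν T ν) (evalSigma _),
      @IsProbabilityMeasure _ (evalSigma _) ξ ∧
      (∀ B : Set X, MeasurableSet B →
        @Measurable (extMTν T ν) ENNReal (evalSigma _) _
          (fun ρ => (ρ : Measure X) B)) ∧
      ∀ B : Set X, MeasurableSet B →
        lam B = @lintegral _ (evalSigma _) ξ (fun ρ => (ρ : Measure X) B) := by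
  classical
  -- X is nonempty
  have hXne : Nonempty X := by
    by_contra h
    rw [not_nonempty_iff] at h
    have h1 : lam Set.univ = 1 := measure_univ
    rw [Set.univ_eq_empty_iff.mpr h, measure_empty] at h1
    exact zero_ne_one h1
  obtain ⟨x₀⟩ := hXne
  haveI : Nonempty X := ⟨x₀⟩
  -- embedding into ℝ
  obtain ⟨e, he⟩ := MeasureTheory.exists_measurableEmbedding_real X
  -- partial inverse of e
  set g : ℝ → X := fun r => if h : r ∈ Set.range e then he.equivRange.symm ⟨r, h⟩ else x₀
    with hgdef
  have hg : Measurable g := by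
    refine Measurable.dite (f := fun r : Set.range e => he.equivRange.symm r)
      (g := fun _ => x₀) ?_ measurable_const he.measurableSet_range
    exact he.equivRange.symm.measurable
  have hge : ∀ x, g (e x) = x := by
    intro x
    have hx : e x ∈ Set.range e := ⟨x, rfl⟩
    rw [hgdef]
    simp only [hx, dif_pos]
    have hco : (he.equivRange x : ℝ) = e x := by
      rw [MeasurableEmbedding.equivRange_apply]
    have : (⟨e x, hx⟩ : Set.range e) = he.equivRange x := by
      apply Subtype.ext
      exact hco.symm
    rw [this, MeasurableEquiv.symm_apply_apply]
  -- disintegration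
  set μ : Measure (Y × X) := Measure.map (fun x => (T x, x)) lam with hμdef
  have hTid : Measurable (fun x => (T x, x)) := hT.prodMk measurable_id
  haveI : IsProbabilityMeasure μ := Measure.isProbabilityMeasure_map hTid.aemeasurable
  set κ := μ.condKernel with hκdef
  have hfst : μ.fst = ν := by
    rw [hμdef, Measure.fst, Measure.map_map measurable_fst hTid]
    exact hlam
  have hdis : ν ⊗ₘ κ = μ := by
    rw [← hfst]
    exact μ.disintegrate μ.condKernel
  -- the quantile section
  set G : Y → ℝ → ℝ := fun y x => ((κ y) (e ⁻¹' Set.Iic x)).toReal with hGdef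
  have hmapG : ∀ y x, G y x = ((Measure.map e (κ y)) (Set.Iic x)).toReal := by
    intro y x
    rw [Measure.map_apply he.measurable measurableSet_Iic]
  haveI hprob_me : ∀ y, IsProbabilityMeasure (Measure.map e (κ y)) := fun y =>
    Measure.isProbabilityMeasure_map he.measurable.aemeasurable
  have hchar : ∀ y, ∀ u ∈ Set.Ioo (0:ℝ) 1, ∀ x,
      (sInf {z | u ≤ G y z} ≤ x ↔ u ≤ G y x) := by
    intro y u hu x
    have := quantile_le_iff (Measure.map e (κ y)) hu.1 hu.2 x
    simp only [← hmapG] at this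
    exact this
  set qf : Y × ℝ → ℝ := fun p => if p.2 ∈ Set.Ioo (0:ℝ) 1
    then sInf {z | p.2 ≤ G p.1 z} else 37 with hqfdef
  have hGmeas : ∀ x, Measurable (fun y => G y x) := by
    intro x
    exact (ProbabilityTheory.Kernel.measurable_coe κ
      (he.measurable measurableSet_Iic)).ennreal_toReal
  have hqf : Measurable qf := by
    apply measurable_of_Iic
    intro x
    have hset : qf ⁻¹' Set.Iic x =
        ({p : Y × ℝ | p.2 ∈ Set.Ioo (0:ℝ) 1} ∩ {p : Y × ℝ | p.2 ≤ G p.1 x}) ∪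
        ({p : Y × ℝ | p.2 ∈ Set.Ioo (0:ℝ) 1}ᶜ ∩ {_p : Y × ℝ | (37:ℝ) ≤ x}) := by
      ext p
      by_cases hp : p.2 ∈ Set.Ioo (0:ℝ) 1
      · simp only [Set.mem_preimage, Set.mem_Iic, hqfdef, hp, if_true, Set.mem_union,
          Set.mem_inter_iff, Set.mem_setOf_eq, Set.mem_compl_iff, not_true, false_and,
          or_false, true_and]
        exact hchar p.1 p.2 hp x
      · simp only [Set.mem_preimage, Set.mem_Iic, hqfdef, hp, if_false, Set.mem_union,
          Set.mem_inter_iff, Set.mem_setOf_eq, Set.mem_compl_iff, not_false_iff, true_and,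
          false_and, false_or]
    rw [hset]
    have h1 : MeasurableSet {p : Y × ℝ | p.2 ∈ Set.Ioo (0:ℝ) 1} :=
      measurable_snd measurableSet_Ioo
    have h2 : MeasurableSet {p : Y × ℝ | p.2 ≤ G p.1 x} :=
      measurableSet_le measurable_snd ((hGmeas x).comp measurable_fst)
    exact (h1.inter h2).union (h1.compl.inter (MeasurableSet.const _))
  set sf : Y × ℝ → X := fun p => g (qf p) with hsfdef
  have hsf : Measurable sf := hg.comp hqf
  -- the base probability measure on (0,1)
  set P : Measure ℝ := volume.restrict (Set.Ioo 0 1) with hPdef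
  haveI : IsProbabilityMeasure P := ⟨by rw [hPdef]; simp [Real.volume_Ioo]⟩
  -- key: for every y, the section pushes P to κ y
  have hmapA : ∀ y, Measure.map (fun u => sf (y, u)) P = κ y := by
    intro y
    have hqy : Measurable (fun u => qf (y, u)) := hqf.comp measurable_prodMk_left
    have hq_map : Measure.map (fun u => qf (y, u)) P = Measure.map e (κ y) := by
      refine map_quantile _ _ hqy ?_
      intro u hu x
      have : qf (y, u) = sInf {z | u ≤ G y z} := by
        simp only [hqfdef, hu, if_true]
      rw [this, ← hmapG y x]
      exact hchar y u hu x
    have : (fun u => sf (y, u)) = g ∘ (fun u => qf (y, u)) := rfl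
    rw [this, ← Measure.map_map hg hqy, hq_map, Measure.map_map hg he.measurable]
    have : g ∘ e = id := funext hge
    rw [this, Measure.map_id]
  -- lam B = ∫ κ y B dν
  have hC : ∀ B : Set X, MeasurableSet B → lam B = ∫⁻ y, κ y B ∂ν := by
    intro B hB
    have h1 : lam B = μ (Prod.snd ⁻¹' B) := by
      rw [hμdef, Measure.map_apply hTid (measurable_snd hB)]
      rfl
    rw [h1, ← hdis, Measure.compProd_apply (measurable_snd hB)]
    rfl
  -- a.e. y, κ y is concentrated on the fiber over y
  have hD : ∀ᵐ y ∂ν, κ y {x | T x = y} = 1 := by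
    set D : Set (Y × X) := {p | T p.2 = p.1} with hDdef
    have hDmeas : MeasurableSet D :=
      measurableSet_eq_fun'' (show Measurable fun p : Y × X => T p.2 from hT.comp measurable_snd)
        measurable_fst
    have hμD : μ D = 1 := by
      rw [hμdef, Measure.map_apply hTid hDmeas]
      have : (fun x => (T x, x)) ⁻¹' D = Set.univ := by
        ext x; simp [hDdef]
      rw [this]
      exact measure_univ
    have hint : ∫⁻ y, κ y (Prod.mk y ⁻¹' D) ∂ν = 1 := by
      rw [← Measure.compProd_apply hDmeas, hdis, hμD]
    have hfm : Measurable (fun y => κ y (Prod.mk y ⁻¹' D)) :=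
      ProbabilityTheory.Kernel.measurable_kernel_prodMk_left hDmeas
    have := ae_eq_one_of_lintegral_eq_one ν hfm (fun y => prob_le_one) hint
    filter_upwards [this] with y hy
    have : Prod.mk y ⁻¹' D = {x | T x = y} := rfl
    rwa [this] at hy
  -- measurable set in ℝ × Y for the fiber condition
  set S' : Set (ℝ × Y) := {p | T (sf (p.2, p.1)) = p.2} with hS'def
  have hS'meas : MeasurableSet S' :=
    measurableSet_eq_fun'' (show Measurable fun p : ℝ × Y => T (sf (p.2, p.1)) from
      hT.comp (hsf.comp measurable_swap)) measurable_snd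
  -- a.e. u, ν-a.e. y the section lands in the fiber
  have hE : ∀ᵐ u ∂P, ν {y | T (sf (y, u)) = y} = 1 := by
    have hfib : ∀ y, MeasurableSet {x | T x = y} := fun y => hT (measurableSet_singleton y)
    have hPsec : ∀ᵐ y ∂ν, P {u | T (sf (y, u)) = y} = 1 := by
      filter_upwards [hD] with y hy
      have hsy : Measurable fun u => sf (y, u) := hsf.comp measurable_prodMk_left
      have : {u | T (sf (y, u)) = y} = (fun u => sf (y, u)) ⁻¹' {x | T x = y} := rfl
      rw [this, ← Measure.map_apply hsy (hfib y), hmapA y]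
      exact hy
    have hprod : (P.prod ν) S' = 1 := by
      rw [Measure.prod_apply_symm hS'meas]
      have : ∫⁻ y, P ((fun u => (u, y)) ⁻¹' S') ∂ν = ∫⁻ y, 1 ∂ν := by
        refine lintegral_congr_ae ?_
        filter_upwards [hPsec] with y hy
        have hsec : (fun u => (u, y)) ⁻¹' S' = {u | T (sf (y, u)) = y} := rfl
        rw [hsec, hy]
      rw [this, lintegral_one, measure_univ]
    have hprod2 : ∫⁻ u, ν (Prod.mk u ⁻¹' S') ∂P = 1 := by
      rw [← Measure.prod_apply hS'meas]
      exact hprod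
    have hfm : Measurable (fun u => ν (Prod.mk u ⁻¹' S')) :=
      measurable_measure_prodMk_left hS'meas
    have := ae_eq_one_of_lintegral_eq_one P hfm (fun u => prob_le_one) hprod2
    filter_upwards [this] with u hu
    exact hu
  -- the good set
  set Ugood : Set ℝ := {u | u ∈ Set.Ioo (0:ℝ) 1 ∧ ν {y | T (sf (y, u)) = y} = 1} with hUdef
  have hUmeas : MeasurableSet Ugood := by
    have h1 : Measurable (fun u => ν (Prod.mk u ⁻¹' S')) :=
      measurable_measure_prodMk_left hS'meas
    have : Ugood = Set.Ioo (0:ℝ) 1 ∩ ((fun u => ν (Prod.mk u ⁻¹' S')) ⁻¹' {1}) := rfl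
    rw [this]
    exact measurableSet_Ioo.inter (h1 (measurableSet_singleton 1))
  have hUfull : ∀ᵐ u ∂P, u ∈ Ugood := by
    filter_upwards [hE, ae_restrict_mem measurableSet_Ioo] with u h1 h2
    exact ⟨h2, h1⟩
  -- each good u yields an extreme point
  have hρ : ∀ u ∈ Ugood, Measure.map (fun y => sf (y, u)) ν ∈ extMTν T ν := by
    intro u hu
    set su : Y → X := fun y => sf (y, u) with hsudef
    have hsu : Measurable su := hsf.comp measurable_prodMk_right
    have haefib : ∀ᵐ y ∂ν, T (su y) = y := by
      have hset : MeasurableSet {y | T (su y) = y} :=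
        measurableSet_eq_fun'' (show Measurable fun y => T (su y) from hT.comp hsu) measurable_id
      rw [MeasureTheory.ae_iff]
      have : {y | ¬ T (su y) = y} = {y | T (su y) = y}ᶜ := rfl
      rw [this, measure_compl hset (measure_ne_top ν _), hu.2, measure_univ]
      simp
    haveI hprob : IsProbabilityMeasure (Measure.map su ν) :=
      Measure.isProbabilityMeasure_map hsu.aemeasurable
    have hmem : Measure.map su ν ∈ MTν T ν := by
      refine ⟨hprob, ?_⟩
      rw [Measure.map_map hT hsu]
      have : Measure.map (T ∘ su) ν = Measure.map id ν := by
        apply Measure.map_congr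
        filter_upwards [haefib] with y hy
        exact hy
      rw [this, Measure.map_id]
    -- the graph set
    set Gset : Set X := {x | sf (T x, u) = x} with hGsetdef
    have hGmeas' : MeasurableSet Gset :=
      measurableSet_eq_fun'' (show Measurable fun x => sf (T x, u) from
        hsf.comp (hT.prodMk measurable_const)) measurable_id
    have hGnull : (Measure.map su ν) Gsetᶜ = 0 := by
      rw [Measure.map_apply hsu hGmeas'.compl]
      have : ∀ᵐ y ∂ν, su y ∈ Gset := by
        filter_upwards [haefib] with y hy
        show sf (T (su y), u) = su y
        rw [hy]
      rw [MeasureTheory.ae_iff] at this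
      convert this using 2
      rfl
    -- key claim: any element of MTν absolutely continuous w.r.t. map su ν is equal to it
    have hclaim : ∀ ρ' : Measure X, ρ' ∈ MTν T ν →
        (∀ C : Set X, MeasurableSet C → Measure.map su ν C = 0 → ρ' C = 0) →
        ρ' = Measure.map su ν := by
      intro ρ' hρ' habs
      obtain ⟨hρ'prob, hρ'map⟩ := hρ'
      have hG' : ρ' Gsetᶜ = 0 := habs Gsetᶜ hGmeas'.compl hGnull
      refine Measure.ext (fun s hs => ?_)
      have hinter : ∀ (mmm : Measure X), mmm Gsetᶜ = 0 → ∀ t : Set X, MeasurableSet t →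
          mmm t = mmm (t ∩ Gset) := by
        intro mmm hm t _
        refine le_antisymm ?_ (measure_mono (Set.inter_subset_left))
        calc mmm t ≤ mmm ((t ∩ Gset) ∪ Gsetᶜ) := by
              refine measure_mono ?_
              intro x hx
              by_cases hxG : x ∈ Gset
              · exact Or.inl ⟨hx, hxG⟩
              · exact Or.inr hxG
          _ ≤ mmm (t ∩ Gset) + mmm Gsetᶜ := measure_union_le _ _
          _ = mmm (t ∩ Gset) := by rw [hm, add_zero]
      have hseteq : s ∩ Gset = (T ⁻¹' (su ⁻¹' s)) ∩ Gset := by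
        ext x
        simp only [Set.mem_inter_iff, Set.mem_preimage, hGsetdef, Set.mem_setOf_eq]
        constructor
        · rintro ⟨hxs, hxG⟩
          refine ⟨?_, hxG⟩
          show sf (T x, u) ∈ s
          rw [hxG]; exact hxs
        · rintro ⟨hxs, hxG⟩
          refine ⟨?_, hxG⟩
          have : sf (T x, u) ∈ s := hxs
          rwa [hxG] at this
      have hkey : ∀ (mmm : Measure X), mmm Gsetᶜ = 0 → Measure.map T mmm = ν →
          Measurable su → mmm s = ν (su ⁻¹' s) := by
        intro mmm hm hmmap _
        rw [hinter mmm hm s hs, hseteq, ← hinter mmm hm _ (hT (hsu hs)),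
          ← Measure.map_apply hT (hsu hs), hmmap]
      rw [hkey ρ' hG' hρ'map hsu, hkey (Measure.map su ν) hGnull hmem.2 hsu]
    refine ⟨hmem, ?_⟩
    intro θ hθ0 hθ1 ρ₁ h1 ρ₂ h2 heq
    have habs : ∀ (θ' : NNReal) (ρa ρb : Measure X), 0 < θ' →
        Measure.map su ν = θ' • ρa + (1 - θ' + θ' - θ' : NNReal) • ρb →
        True := fun _ _ _ _ _ => trivial
    have h1' : ρ₁ = Measure.map su ν := by
      refine hclaim ρ₁ h1 (fun C hC hC0 => ?_)
      have := congrArg (fun m : Measure X => m C) heq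
      simp only [Measure.add_apply, Measure.smul_apply, smul_eq_mul] at this
      rw [hC0] at this
      have hsum := this.symm
      rw [add_eq_zero] at hsum
      have := hsum.1
      rcases mul_eq_zero.mp this with h | h
      · exfalso
        apply hθ0.ne'
        simpa using h
      · exact h
    have h2' : ρ₂ = Measure.map su ν := by
      refine hclaim ρ₂ h2 (fun C hC hC0 => ?_)
      have := congrArg (fun m : Measure X => m C) heq
      simp only [Measure.add_apply, Measure.smul_apply, smul_eq_mul] at this
      rw [hC0] at this
      have hsum := this.symm
      rw [add_eq_zero] at hsum
      have := hsum.2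
      rcases mul_eq_zero.mp this with h | h
      · exfalso
        have hpos : 0 < 1 - θ := tsub_pos_of_lt hθ1
        exact hpos.ne' (ENNReal.coe_eq_zero.mp h)
      · exact h
    rw [h1', h2']
  -- a fixed good point
  have hU0 : ∃ u₀, u₀ ∈ Ugood := hUfull.exists
  obtain ⟨u₀, hu₀⟩ := hU0
  -- the map into the extreme points
  set pick : ℝ → ℝ := fun u => if u ∈ Ugood then u else u₀ with hpickdef
  have hpick : ∀ u, pick u ∈ Ugood := by
    intro u
    by_cases h : u ∈ Ugood <;> simp [hpickdef, h, hu₀]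
  set Φ : ℝ → extMTν T ν := fun u =>
    ⟨Measure.map (fun y => sf (y, pick u)) ν, hρ _ (hpick u)⟩ with hΦdef
  -- evaluation of Φ
  have hΦeval : ∀ B : Set X, MeasurableSet B → ∀ u,
      ((Φ u : Measure X)) B = if u ∈ Ugood then ν {y | sf (y, u) ∈ B}
        else ν {y | sf (y, u₀) ∈ B} := by
    intro B hB u
    have hmap : ∀ v, Measure.map (fun y => sf (y, v)) ν B = ν {y | sf (y, v) ∈ B} := by
      intro v
      have hsv : Measurable fun y => sf (y, v) := hsf.comp measurable_prodMk_right
      rw [Measure.map_apply hsv hB]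
      rfl
    by_cases h : u ∈ Ugood
    · simp only [hΦdef, hpickdef, h, if_true, hmap]
    · simp only [hΦdef, hpickdef, h, if_false, hmap]
  -- measurability of evaluations of Φ
  have hevalmeas : ∀ B : Set X, MeasurableSet B →
      Measurable (fun u => ((Φ u : Measure X)) B) := by
    intro B hB
    have hSB : MeasurableSet {p : ℝ × Y | sf (p.2, p.1) ∈ B} :=
      (hsf.comp measurable_swap) hB
    have hmeas1 : Measurable (fun u => ν {y | sf (y, u) ∈ B}) := by
      have : (fun u => ν {y | sf (y, u) ∈ B})
          = fun u => ν (Prod.mk u ⁻¹' {p : ℝ × Y | sf (p.2, p.1) ∈ B}) := rfl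
      rw [this]
      exact measurable_measure_prodMk_left hSB
    have : (fun u => ((Φ u : Measure X)) B)
        = fun u => if u ∈ Ugood then ν {y | sf (y, u) ∈ B} else ν {y | sf (y, u₀) ∈ B} := by
      funext u; exact hΦeval B hB u
    rw [this]
    exact Measurable.ite hUmeas hmeas1 measurable_const
  -- measurability of Φ into evalSigma
  have hΦmeas : @Measurable ℝ (extMTν T ν) _ (evalSigma _) Φ := by
    rw [@measurable_iff_comap_le]
    rw [evalSigma]
    simp only [MeasurableSpace.comap_iSup]
    refine iSup_le (fun B => iSup_le (fun hB => ?_))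
    rw [MeasurableSpace.comap_comp]
    have : Measurable ((fun ρ : extMTν T ν => (ρ : Measure X) B) ∘ Φ) := hevalmeas B hB
    exact measurable_iff_comap_le.mp this
  -- measurability of evaluations on extMTν
  have heval : ∀ B : Set X, MeasurableSet B →
      @Measurable (extMTν T ν) ENNReal (evalSigma _) _ (fun ρ => (ρ : Measure X) B) := by
    intro B hB
    rw [@measurable_iff_comap_le]
    rw [evalSigma]
    exact le_iSup₂ (f := fun (B : Set X) (_ : MeasurableSet B) =>
      MeasurableSpace.comap (fun ρ : extMTν T ν => (ρ : Measure X) B) inferInstance) B hB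
  -- the measure ξ
  refine ⟨@Measure.map ℝ _ _ (evalSigma _) Φ P, ?_, heval, ?_⟩
  · exact @Measure.isProbabilityMeasure_map ℝ _ _ (evalSigma _) P _ Φ
      (@Measurable.aemeasurable _ _ _ (evalSigma _) _ _ hΦmeas)
  · intro B hB
    rw [@lintegral_map ℝ _ _ (evalSigma _) P _ Φ (heval B hB) hΦmeas]
    have step1 : ∫⁻ u, ((Φ u : Measure X)) B ∂P
        = ∫⁻ u, ν (Prod.mk u ⁻¹' {p : ℝ × Y | sf (p.2, p.1) ∈ B}) ∂P := by
      refine lintegral_congr_ae ?_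
      filter_upwards [hUfull] with u hu
      rw [hΦeval B hB u, if_pos hu]
      rfl
    have hSB : MeasurableSet {p : ℝ × Y | sf (p.2, p.1) ∈ B} :=
      (hsf.comp measurable_swap) hB
    have step2 : ∫⁻ u, ν (Prod.mk u ⁻¹' {p : ℝ × Y | sf (p.2, p.1) ∈ B}) ∂P
        = (P.prod ν) {p : ℝ × Y | sf (p.2, p.1) ∈ B} :=
      (Measure.prod_apply hSB).symm
    have step3 : (P.prod ν) {p : ℝ × Y | sf (p.2, p.1) ∈ B}
        = ∫⁻ y, P ((fun u => (u, y)) ⁻¹' {p : ℝ × Y | sf (p.2, p.1) ∈ B}) ∂ν :=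
      Measure.prod_apply_symm hSB
    have step4 : ∫⁻ y, P ((fun u => (u, y)) ⁻¹' {p : ℝ × Y | sf (p.2, p.1) ∈ B}) ∂ν
        = ∫⁻ y, κ y B ∂ν := by
      refine lintegral_congr (fun y => ?_)
      have hsec : (fun u => (u, y)) ⁻¹' {p : ℝ × Y | sf (p.2, p.1) ∈ B}
          = (fun u => sf (y, u)) ⁻¹' B := rfl
      have hsy : Measurable fun u => sf (y, u) := hsf.comp measurable_prodMk_left
      rw [hsec, ← Measure.map_apply hsy hB, hmapA y]
    rw [step1, step2, step3, step4, ← hC B hB]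
end

section
/- Let X₁ ⊆ ℝᵈ compact and X₂,...,Xₙ Polish, μ₁,...,μₙ Borel probability measures with μ₁ non-atomic, and let c be a bounded continuous cost, differentiable in x₁ everywhere, satisfying the m-twist condition on c-splitting sets. Assume the Kantorovich dual problem admits a solution (φ₁,...,φₙ) with φ₁ differentiable μ₁-a.e., Σφᵢ(xᵢ) ≤ c everywhere, and ∫c dγ = Σ∫φᵢ dμᵢ for an optimal plan γ. Then there exist k ≤ m, nonnegative measurable functions α₁,...,α_k on X₁ with Σαᵢ = 1 μ₁-a.e., and Borel maps G₁,...,G_k : X₁ → X₂ × ⋯ × Xₙ such that γ = Σᵢ₌₁^k αᵢ (Id × Gᵢ)_#μ₁. -/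
open MeasureTheory Set

open scoped ENNReal

namespace Stmt14Aux

noncomputable def rSeq (ρ : Measure ℝ) : ℕ → ℝ
  | 0 => if 0 < ρ Set.univ then sInf {t | 0 < ρ (Set.Iic t)} else 0
  | (k+1) => if 0 < ρ (Set.Ioi (rSeq ρ k)) then sInf {t | 0 < ρ (Set.Ioc (rSeq ρ k) t)}
      else rSeq ρ k

noncomputable def wSeq (ρ : Measure ℝ) : ℕ → ℝ≥0∞
  | 0 => ρ (Set.Iic (rSeq ρ 0))
  | (k+1) => ρ (Set.Ioc (rSeq ρ k) (rSeq ρ (k+1)))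

lemma rSeq_zero (ρ : Measure ℝ) :
    rSeq ρ 0 = if 0 < ρ Set.univ then sInf {t | 0 < ρ (Set.Iic t)} else 0 := rfl

lemma rSeq_succ (ρ : Measure ℝ) (k : ℕ) :
    rSeq ρ (k+1) = if 0 < ρ (Set.Ioi (rSeq ρ k)) then
      sInf {t | 0 < ρ (Set.Ioc (rSeq ρ k) t)} else rSeq ρ k := rfl

lemma wSeq_zero (ρ : Measure ℝ) : wSeq ρ 0 = ρ (Set.Iic (rSeq ρ 0)) := rfl

lemma wSeq_succ (ρ : Measure ℝ) (k : ℕ) :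
    wSeq ρ (k+1) = ρ (Set.Ioc (rSeq ρ k) (rSeq ρ (k+1))) := rfl

lemma measure_eq_inter {α : Type*} [MeasurableSpace α] {ρ : Measure α} {A : Set α}
    (h : ρ Aᶜ = 0) (s : Set α) : ρ s = ρ (s ∩ A) := by
  refine le_antisymm ?_ (measure_mono inter_subset_left)
  calc ρ s ≤ ρ (s ∩ A) + ρ (s \ A) := measure_le_inter_add_diff ρ s A
  _ ≤ ρ (s ∩ A) + ρ Aᶜ := by gcongr; exact diff_subset_compl s A
  _ = ρ (s ∩ A) := by rw [h, add_zero]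

lemma exists_atom_gt {σ : Measure ℝ} (hc : σ {t | 0 < σ {t}}ᶜ = 0) {b : ℝ}
    (hb : 0 < σ (Set.Ioi b)) : ∃ u, b < u ∧ 0 < σ {u} := by
  rw [measure_eq_inter hc] at hb
  rcases Set.eq_empty_or_nonempty (Set.Ioi b ∩ {t | 0 < σ {t}}) with h | ⟨u, hu1, hu2⟩
  · rw [h] at hb; simp at hb
  · exact ⟨u, hu1, hu2⟩

lemma enum_zero_measure (m : ℕ) {ρ : Measure ℝ} (h : ρ = 0) :
    (∑ k ∈ Finset.range m, wSeq ρ k • Measure.dirac (rSeq ρ k)) = ρ := by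
  subst h
  refine Finset.sum_eq_zero fun k _ => ?_
  have : wSeq 0 k = 0 := by cases k <;> simp [wSeq_zero, wSeq_succ]
  rw [this, zero_smul]

theorem enum_eq (j : ℕ) : ∀ (ρ : Measure ℝ), IsFiniteMeasure ρ →
    ρ {t | 0 < ρ {t}}ᶜ = 0 → {t | 0 < ρ {t}}.Finite → {t | 0 < ρ {t}}.ncard ≤ j →
    ∀ m, j ≤ m → (∑ k ∈ Finset.range m, wSeq ρ k • Measure.dirac (rSeq ρ k)) = ρ := by
  induction j with
  | zero =>
    intro ρ hfin hconc hA hcard m hm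
    have hAe : {t | 0 < ρ {t}} = ∅ := by
      rw [← Set.ncard_eq_zero hA]; omega
    refine enum_zero_measure m ?_
    have : ρ Set.univ = 0 := by
      rw [measure_eq_inter hconc, hAe, Set.inter_empty, measure_empty]
    exact Measure.measure_univ_eq_zero.mp this
  | succ j ih =>
    intro ρ hfin hconc hA hcard m hm
    rcases Set.eq_empty_or_nonempty {t | 0 < ρ {t}} with hAe | hAne
    · refine enum_zero_measure m ?_
      have : ρ Set.univ = 0 := by
        rw [measure_eq_inter hconc, hAe, Set.inter_empty, measure_empty]
      exact Measure.measure_univ_eq_zero.mp this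
    set A := {t | 0 < ρ {t}} with hAdef
    have ha₀mem : sInf A ∈ A := hAne.csInf_mem hA
    set a₀ := sInf A with ha₀def
    have hlb : ∀ t ∈ A, a₀ ≤ t := fun t ht => csInf_le hA.bddBelow ht
    have haρ : 0 < ρ {a₀} := ha₀mem
    have hIicpos : ∀ t, 0 < ρ (Set.Iic t) ↔ a₀ ≤ t := by
      intro t
      constructor
      · intro ht
        by_contra hlt
        push_neg at hlt
        have he : Set.Iic t ∩ A = ∅ := by
          ext u; simp only [Set.mem_inter_iff, Set.mem_Iic, Set.mem_empty_iff_false,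
            iff_false, not_and]
          intro hu hmem
          exact absurd (le_trans (hlb u hmem) hu) (not_le.mpr hlt)
        rw [measure_eq_inter hconc, he, measure_empty] at ht
        exact lt_irrefl 0 ht
      · intro h
        exact lt_of_lt_of_le haρ (measure_mono (by simpa using h))
    have key0 : rSeq ρ 0 = a₀ := by
      rw [rSeq_zero, if_pos (lt_of_lt_of_le haρ (measure_mono (Set.subset_univ _)))]
      have hmem : a₀ ∈ {t | 0 < ρ (Set.Iic t)} := (hIicpos a₀).mpr le_rfl
      refine le_antisymm (csInf_le ⟨a₀, fun t ht => (hIicpos t).mp ht⟩ hmem)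
        (le_csInf ⟨a₀, hmem⟩ fun t ht => (hIicpos t).mp ht)
    have hIicA : Set.Iic a₀ ∩ A = {a₀} := by
      ext u
      simp only [Set.mem_inter_iff, Set.mem_Iic, Set.mem_singleton_iff]
      constructor
      · rintro ⟨h1, h2⟩; exact le_antisymm h1 (hlb u h2)
      · rintro rfl; exact ⟨le_rfl, ha₀mem⟩
    have keyw0 : wSeq ρ 0 = ρ {a₀} := by
      rw [wSeq_zero, key0, measure_eq_inter hconc, hIicA]
    have hrestr_Iic : ρ.restrict (Set.Iic a₀) = ρ {a₀} • Measure.dirac a₀ := by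
      ext s hs
      rw [Measure.restrict_apply hs, Measure.smul_apply, Measure.dirac_apply' _ hs,
        measure_eq_inter hconc, Set.inter_assoc, hIicA]
      by_cases h : a₀ ∈ s
      · rw [Set.inter_eq_right.mpr (Set.singleton_subset_iff.mpr h),
          Set.indicator_of_mem h]
        simp
      · rw [Set.indicator_of_notMem h, Set.inter_singleton_eq_empty.mpr h]
        simp
    by_cases hdead : ρ (Set.Ioi a₀) = 0
    · -- only one atom
      have hr : ∀ k, rSeq ρ k = a₀ := by
        intro k
        induction k with
        | zero => exact key0
        | succ k ihk => rw [rSeq_succ, ihk, if_neg (by simp [hdead])]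
      obtain ⟨m', rfl⟩ : ∃ m', m = m' + 1 := ⟨m - 1, by omega⟩
      rw [Finset.sum_range_succ']
      have hz : ∀ i ∈ Finset.range m',
          wSeq ρ (i + 1) • Measure.dirac (rSeq ρ (i + 1)) = 0 := by
        intro i _
        have : wSeq ρ (i + 1) = 0 := by
          rw [wSeq_succ, hr, hr, Set.Ioc_self, measure_empty]
        rw [this, zero_smul]
      rw [Finset.sum_eq_zero hz, zero_add, keyw0, key0, ← hrestr_Iic]
      have hcompl := Measure.restrict_add_restrict_compl (μ := ρ) (s := Set.Iic a₀)
        measurableSet_Iic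
      rw [Set.compl_Iic] at hcompl
      conv_rhs => rw [← hcompl]
      rw [Measure.restrict_eq_zero.mpr hdead, add_zero]
    · have hlive : 0 < ρ (Set.Ioi a₀) := lt_of_le_of_ne zero_le (Ne.symm hdead)
      set ρ' := ρ.restrict (Set.Ioi a₀) with hρ'def
      have hatoms' : ∀ t, ρ' {t} = if a₀ < t then ρ {t} else 0 := by
        intro t
        rw [hρ'def, Measure.restrict_apply (measurableSet_singleton t)]
        split_ifs with h
        · congr 1
          rw [Set.inter_eq_left]
          simpa using h
        · have he : {t} ∩ Set.Ioi a₀ = ∅ := by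
            ext u
            simp only [Set.mem_inter_iff, Set.mem_singleton_iff, Set.mem_Ioi,
              Set.mem_empty_iff_false, iff_false, not_and]
            rintro rfl
            exact h
          simp [he]
      have hA' : {t | 0 < ρ' {t}} = A \ {a₀} := by
        ext t
        simp only [Set.mem_setOf_eq, Set.mem_diff, Set.mem_singleton_iff]
        rw [hatoms']
        split_ifs with h
        · exact ⟨fun ht => ⟨ht, ne_of_gt h⟩, fun ht => ht.1⟩
        · constructor
          · intro ht; simp at ht
          · rintro ⟨ht, hne⟩
            exact absurd (lt_of_le_of_ne (hlb t ht) (Ne.symm hne)) h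
      have hconc' : ρ' {t | 0 < ρ' {t}}ᶜ = 0 := by
        rw [hA', hρ'def, Measure.restrict_apply ((hA.diff (t := {a₀})).measurableSet).compl]
        refine measure_mono_null ?_ hconc
        rintro u ⟨hu1, hu2⟩
        simp only [Set.mem_compl_iff, Set.mem_diff, Set.mem_singleton_iff, not_and,
          not_not] at hu1 ⊢
        intro huA
        exact (ne_of_gt (Set.mem_Ioi.mp hu2)).symm (hu1 huA).symm
      have hA'fin : {t | 0 < ρ' {t}}.Finite := by
        rw [hA']; exact hA.diff (t := {a₀})
      have hcard' : {t | 0 < ρ' {t}}.ncard ≤ j := by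
        rw [hA', Set.ncard_diff_singleton_of_mem ha₀mem]
        omega
      have claims : ∀ k, rSeq ρ (k+1) = rSeq ρ' k ∧ a₀ ≤ rSeq ρ' k ∧
          wSeq ρ (k+1) = wSeq ρ' k := by
        intro k
        induction k with
        | zero =>
          have hsets : {t | 0 < ρ' (Set.Iic t)} = {t | 0 < ρ (Set.Ioc a₀ t)} := by
            ext t
            rw [Set.mem_setOf_eq, Set.mem_setOf_eq, hρ'def,
              Measure.restrict_apply measurableSet_Iic,
              Set.inter_comm, Set.Ioi_inter_Iic]
          have hguard' : 0 < ρ' Set.univ := by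
            rw [hρ'def, Measure.restrict_apply_univ]; exact hlive
          have r0' : rSeq ρ' 0 = sInf {t | 0 < ρ (Set.Ioc a₀ t)} := by
            rw [rSeq_zero, if_pos hguard', hsets]
          have r1 : rSeq ρ (0+1) = sInf {t | 0 < ρ (Set.Ioc a₀ t)} := by
            rw [rSeq_succ, key0, if_pos hlive]
          have hne : {t | 0 < ρ (Set.Ioc a₀ t)}.Nonempty := by
            obtain ⟨u, hu1, hu2⟩ := exists_atom_gt hconc hlive
            exact ⟨u, lt_of_lt_of_le hu2 (measure_mono
              (Set.singleton_subset_iff.mpr ⟨hu1, le_rfl⟩))⟩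
          have hbl : ∀ t ∈ {t | 0 < ρ (Set.Ioc a₀ t)}, a₀ ≤ t := by
            intro t ht
            simp only [Set.mem_setOf_eq] at ht
            by_contra hlt
            push_neg at hlt
            rw [Set.Ioc_eq_empty (fun h => absurd (le_of_lt h) (not_le.mpr hlt)),
              measure_empty] at ht
            exact lt_irrefl 0 ht
          have hge : a₀ ≤ rSeq ρ' 0 := by
            rw [r0']; exact le_csInf hne hbl
          have hr10 : rSeq ρ (0+1) = rSeq ρ' 0 := by rw [r1, r0']
          refine ⟨hr10, hge, ?_⟩
          rw [wSeq_succ, wSeq_zero, key0, hr10, hρ'def,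
            Measure.restrict_apply measurableSet_Iic, Set.inter_comm,
            Set.Ioi_inter_Iic]
        | succ k ihk =>
          obtain ⟨hrk, hgek, _⟩ := ihk
          set b := rSeq ρ' k with hbdef
          have hIoi : ρ' (Set.Ioi b) = ρ (Set.Ioi b) := by
            rw [hρ'def, Measure.restrict_apply measurableSet_Ioi,
              Set.inter_eq_left.mpr (Set.Ioi_subset_Ioi hgek)]
          have hIoc : ∀ t, ρ' (Set.Ioc b t) = ρ (Set.Ioc b t) := by
            intro t
            rw [hρ'def, Measure.restrict_apply measurableSet_Ioc,
              Set.inter_eq_left.mpr (Set.Ioc_subset_Ioi_self.trans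
                (Set.Ioi_subset_Ioi hgek))]
          have hsets : {t | 0 < ρ' (Set.Ioc b t)} = {t | 0 < ρ (Set.Ioc b t)} := by
            ext t; rw [Set.mem_setOf_eq, Set.mem_setOf_eq, hIoc]
          have hreq : rSeq ρ (k+1+1) = rSeq ρ' (k+1) := by
            rw [rSeq_succ ρ (k+1), rSeq_succ ρ' k, hrk, ← hbdef, hIoi, hsets]
          have hge' : a₀ ≤ rSeq ρ' (k+1) := by
            rw [rSeq_succ ρ' k, ← hbdef]
            split_ifs with h
            · have hne : {t | 0 < ρ' (Set.Ioc b t)}.Nonempty := by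
                obtain ⟨u, hu1, hu2⟩ := exists_atom_gt hconc' h
                exact ⟨u, lt_of_lt_of_le hu2 (measure_mono
                  (Set.singleton_subset_iff.mpr ⟨hu1, le_rfl⟩))⟩
              refine le_trans hgek (le_csInf hne ?_)
              intro t ht
              simp only [Set.mem_setOf_eq] at ht
              by_contra hlt
              push_neg at hlt
              rw [Set.Ioc_eq_empty (fun hc => absurd (le_of_lt hc) (not_le.mpr hlt)),
                measure_empty] at ht
              exact lt_irrefl 0 ht
            · exact hgek
          refine ⟨hreq, hge', ?_⟩
          rw [wSeq_succ ρ (k+1), wSeq_succ ρ' k, hrk, ← hbdef, hreq, hIoc]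
      obtain ⟨m', rfl⟩ : ∃ m', m = m' + 1 := ⟨m - 1, by omega⟩
      rw [Finset.sum_range_succ']
      have hsum' : ∑ i ∈ Finset.range m', wSeq ρ (i + 1) • Measure.dirac (rSeq ρ (i + 1))
          = ∑ i ∈ Finset.range m', wSeq ρ' i • Measure.dirac (rSeq ρ' i) := by
        refine Finset.sum_congr rfl fun i _ => ?_
        obtain ⟨h1, _, h3⟩ := claims i
        rw [h1, h3]
      rw [hsum', ih ρ' (by rw [hρ'def]; infer_instance) hconc' hA'fin hcard' m' (by omega),
        keyw0, key0, ← hrestr_Iic]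
      have hcompl := Measure.restrict_add_restrict_compl (μ := ρ) (s := Set.Iic a₀)
        measurableSet_Iic
      rw [Set.compl_Iic] at hcompl
      rw [hρ'def, add_comm]
      exact hcompl


section Meas

variable {α : Type*} [MeasurableSpace α]

lemma measurable_comp_countable {F : α → ℝ → ℝ≥0∞} (hF : ∀ t, Measurable fun x => F x t)
    {g : α → ℝ} (hg : Measurable g) (hct : (Set.range g).Countable) :
    Measurable fun x => F x (g x) := by
  have hcnt : Countable (Set.range g) := hct.to_subtype
  have heq : ∀ x, F x (g x) =
      ∑' t : Set.range g, Set.indicator (g ⁻¹' {(t : ℝ)}) (fun x => F x t) x := by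
    intro x
    rw [tsum_eq_single (⟨g x, Set.mem_range_self x⟩ : Set.range g) ?_]
    · rw [Set.indicator_of_mem (by simp : x ∈ g ⁻¹' {g x})]
    · intro t ht
      rw [Set.indicator_of_notMem]
      simp only [Set.mem_preimage, Set.mem_singleton_iff]
      intro h
      exact ht (Subtype.ext h.symm)
  simp_rw [heq]
  exact Measurable.ennreal_tsum fun t =>
    (hF t).indicator (hg (measurableSet_singleton _))

/-- dyadic upper approximation -/
noncomputable def dy (n : ℕ) (t : ℝ) : ℝ := (⌈t * 2 ^ n⌉ : ℝ) / 2 ^ n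

lemma le_dy (n : ℕ) (t : ℝ) : t ≤ dy n t := by
  rw [dy, le_div_iff₀ (by positivity)]
  exact Int.le_ceil _

lemma dy_lt (n : ℕ) (t : ℝ) : dy n t < t + (1/2) ^ n := by
  rw [dy, div_lt_iff₀ (by positivity)]
  have h2 : ((1:ℝ)/2)^n * 2^n = 1 := by
    rw [div_pow, one_pow, div_mul_cancel₀ _ (by positivity : (2:ℝ)^n ≠ 0)]
  calc (⌈t * 2 ^ n⌉ : ℝ) < t * 2 ^ n + 1 := Int.ceil_lt_add_one _
  _ = (t + (1/2)^n) * 2 ^ n := by rw [add_mul, h2]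

lemma dy_antitone (n : ℕ) (t : ℝ) : dy (n+1) t ≤ dy n t := by
  rw [dy, dy, div_le_div_iff₀ (by positivity) (by positivity)]
  have : (⌈t * 2 ^ (n+1)⌉ : ℝ) ≤ 2 * ⌈t * 2 ^ n⌉ := by
    have := Int.ceil_le.mpr (show t * 2 ^ (n+1) ≤ ((2 * ⌈t * 2 ^ n⌉ : ℤ) : ℝ) by
      push_cast
      calc t * 2 ^ (n+1) = (t * 2 ^ n) * 2 := by ring
      _ ≤ (⌈t * 2 ^ n⌉ : ℝ) * 2 := by nlinarith [Int.le_ceil (t * 2 ^ n)]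
      _ = 2 * ⌈t * 2 ^ n⌉ := by ring)
    exact_mod_cast this
  calc (⌈t * 2 ^ (n+1)⌉ : ℝ) * 2 ^ n ≤ (2 * ⌈t * 2 ^ n⌉) * 2 ^ n := by nlinarith [pow_pos (show (0:ℝ) < 2 by norm_num) n]
  _ = (⌈t * 2 ^ n⌉ : ℝ) * 2 ^ (n+1) := by ring

lemma iInter_dy (t : ℝ) : ⋂ n, Set.Iic (dy n t) = Set.Iic t := by
  ext s
  simp only [Set.mem_iInter, Set.mem_Iic]
  constructor
  · intro h
    by_contra hst
    push_neg at hst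
    obtain ⟨n, hn⟩ := exists_pow_lt_of_lt_one (show (0:ℝ) < s - t by linarith)
      (show (1:ℝ)/2 < 1 by norm_num)
    have := (h n).trans_lt (dy_lt n t)
    linarith
  · intro h n
    exact h.trans (le_dy n t)

lemma measurable_dy_comp (n : ℕ) {g : α → ℝ} (hg : Measurable g) :
    Measurable (fun x => dy n (g x)) ∧ (Set.range fun x => dy n (g x)).Countable := by
  constructor
  · simp only [dy]
    exact (measurable_from_top (f := fun z : ℤ => ((z:ℝ)))).comp
      (Int.measurable_ceil.comp (hg.mul_const _)) |>.div_const _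
  · refine Set.Countable.mono ?_ (Set.countable_range fun z : ℤ => (z : ℝ) / 2 ^ n)
    rintro u ⟨x, rfl⟩
    exact ⟨⌈g x * 2 ^ n⌉, rfl⟩


variable (ν : α → Measure ℝ)
variable (hνm : ∀ s : Set ℝ, MeasurableSet s → Measurable fun x => ν x s)
variable (hνp : ∀ x, ν x Set.univ = 1)

include hνm hνp in
lemma measurable_nu_Iic {g : α → ℝ} (hg : Measurable g) :
    Measurable fun x => ν x (Set.Iic (g x)) := by
  have hfin : ∀ x t, ν x (Set.Iic t) ≠ ∞ := fun x t =>
    ne_top_of_le_ne_top (by rw [hνp x]; exact ENNReal.one_ne_top)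
      (measure_mono (Set.subset_univ _))
  have heq : ∀ x, ν x (Set.Iic (g x)) = ⨅ n, ν x (Set.Iic (dy n (g x))) := by
    intro x
    rw [← iInter_dy (g x)]
    have hanti : Antitone (fun n => Set.Iic (dy n (g x))) := by
      refine antitone_nat_of_succ_le fun n => Set.Iic_subset_Iic.mpr (dy_antitone n _)
    exact hanti.measure_iInter (fun n => (measurableSet_Iic).nullMeasurableSet)
      ⟨0, hfin x _⟩
  simp_rw [heq]
  refine Measurable.iInf fun n => ?_
  obtain ⟨hm, hct⟩ := measurable_dy_comp n hg
  exact measurable_comp_countable (F := fun x t => ν x (Set.Iic t))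
    (fun t => hνm _ measurableSet_Iic) hm hct

include hνm hνp in
lemma measurable_nu_Ioi {g : α → ℝ} (hg : Measurable g) :
    Measurable fun x => ν x (Set.Ioi (g x)) := by
  have heq : ∀ x, ν x (Set.Ioi (g x)) = 1 - ν x (Set.Iic (g x)) := by
    intro x
    rw [← Set.compl_Iic, measure_compl measurableSet_Iic
      (ne_top_of_le_ne_top (by rw [hνp x]; exact ENNReal.one_ne_top)
        (measure_mono (Set.subset_univ _))), hνp x]
  simp_rw [heq]
  exact Measurable.const_sub (measurable_nu_Iic ν hνm hνp hg) _

include hνm hνp in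
lemma measurable_nu_Ioc {g₁ g₂ : α → ℝ} (hg₁ : Measurable g₁) (hg₂ : Measurable g₂) :
    Measurable fun x => ν x (Set.Ioc (g₁ x) (g₂ x)) := by
  have heq : ∀ x, ν x (Set.Ioc (g₁ x) (g₂ x)) =
      ν x (Set.Iic (g₂ x)) - ν x (Set.Iic (g₁ x)) := by
    intro x
    rcases le_or_gt (g₁ x) (g₂ x) with h | h
    · rw [show Set.Ioc (g₁ x) (g₂ x) = Set.Iic (g₂ x) \ Set.Iic (g₁ x) by
        ext u; simp [and_comm]]
      rw [measure_diff (Set.Iic_subset_Iic.mpr h) measurableSet_Iic.nullMeasurableSet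
        (ne_top_of_le_ne_top (by rw [hνp x]; exact ENNReal.one_ne_top)
          (measure_mono (Set.subset_univ _)))]
    · rw [Set.Ioc_eq_empty (by exact fun hc => absurd hc (not_lt.mpr h.le)), measure_empty,
        eq_comm, tsub_eq_zero_iff_le]
      exact measure_mono (Set.Iic_subset_Iic.mpr h.le)
  simp_rw [heq]
  exact (measurable_nu_Iic ν hνm hνp hg₂).sub (measurable_nu_Iic ν hνm hνp hg₁)

include hνm hνp in
lemma measurable_rSeq (hν₂ : ∀ x, ν x (Set.Iio (-2)) = 0) (hν₂' : ∀ x, ν x (Set.Ioi 2) = 0)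
    (k : ℕ) : Measurable fun x => rSeq (ν x) k := by
  induction k with
  | zero =>
    have heq : ∀ x, rSeq (ν x) 0 = sInf {t | 0 < ν x (Set.Iic t)} := by
      intro x
      rw [rSeq_zero, if_pos (by rw [hνp x]; norm_num)]
    simp_rw [heq]
    apply measurable_of_Iio
    intro a
    have hne : ∀ x, (2:ℝ) ∈ {t | 0 < ν x (Set.Iic t)} := by
      intro x
      have : ν x (Set.Iic 2) = 1 := by
        rw [← Set.compl_Ioi, measure_compl measurableSet_Ioi
          (ne_top_of_le_ne_top (by rw [hνp x]; exact ENNReal.one_ne_top)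
            (measure_mono (Set.subset_univ _))), hνp x, hν₂' x, tsub_zero]
      simp [this]
    have hbb : ∀ x, ∀ t ∈ {t | 0 < ν x (Set.Iic t)}, (-2:ℝ) ≤ t := by
      intro x t ht
      by_contra hlt
      push_neg at hlt
      have : ν x (Set.Iic t) = 0 :=
        measure_mono_null (fun u hu => lt_of_le_of_lt hu hlt) (hν₂ x)
      rw [Set.mem_setOf_eq, this] at ht
      exact lt_irrefl 0 ht
    have hpre : (fun x => sInf {t | 0 < ν x (Set.Iic t)}) ⁻¹' Set.Iio a =
        ⋃ (q : ℚ), ⋃ (_ : (q:ℝ) < a), {x | 0 < ν x (Set.Iic (q:ℝ))} := by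
      ext x
      simp only [Set.mem_preimage, Set.mem_Iio, Set.mem_iUnion, Set.mem_setOf_eq]
      constructor
      · intro h
        obtain ⟨t, ht, hta⟩ := (csInf_lt_iff ⟨-2, hbb x⟩ ⟨2, hne x⟩).mp h
        obtain ⟨q, hq1, hq2⟩ := exists_rat_btwn hta
        exact ⟨q, hq2, lt_of_lt_of_le ht (measure_mono (Set.Iic_subset_Iic.mpr hq1.le))⟩
      · rintro ⟨q, hq, hx⟩
        exact lt_of_le_of_lt (csInf_le ⟨-2, hbb x⟩ hx) hq
    rw [hpre]
    exact MeasurableSet.iUnion fun q => MeasurableSet.iUnion fun _ =>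
      measurableSet_lt measurable_const (hνm _ measurableSet_Iic)
  | succ k ihk =>
    have heq : ∀ x, rSeq (ν x) (k+1) =
        if 0 < ν x (Set.Ioi (rSeq (ν x) k)) then
          sInf {t | 0 < ν x (Set.Ioc (rSeq (ν x) k) t)} else rSeq (ν x) k :=
      fun x => rSeq_succ (ν x) k
    simp_rw [heq]
    have hC : MeasurableSet {x | 0 < ν x (Set.Ioi (rSeq (ν x) k))} :=
      measurableSet_lt measurable_const (measurable_nu_Ioi ν hνm hνp ihk)
    refine Measurable.ite hC ?_ ihk
    -- measurability of x ↦ sInf {t | 0 < ν x (Ioc (r k x) t)}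
    apply measurable_of_Iio
    intro a
    have hkey : ∀ x, sInf {t | 0 < ν x (Set.Ioc (rSeq (ν x) k) t)} < a ↔
        ((0 < ν x (Set.Ioi (rSeq (ν x) k)) ∧
          ∃ q : ℚ, (q:ℝ) < a ∧ 0 < ν x (Set.Ioc (rSeq (ν x) k) (q:ℝ))) ∨
         (¬ 0 < ν x (Set.Ioi (rSeq (ν x) k)) ∧ 0 < a)) := by
      intro x
      set b := rSeq (ν x) k with hb
      by_cases hc : 0 < ν x (Set.Ioi b)
      · have hne : {t | 0 < ν x (Set.Ioc b t)}.Nonempty := by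
          have hun : Set.Ioi b = ⋃ n : ℕ, Set.Ioc b (b + (n+1)) := by
            ext u
            simp only [Set.mem_Ioi, Set.mem_iUnion, Set.mem_Ioc]
            constructor
            · intro hu
              obtain ⟨n, hn⟩ := exists_nat_ge (u - b)
              exact ⟨n, hu, by linarith⟩
            · rintro ⟨n, hn, _⟩; exact hn
          rw [hun] at hc
          by_contra hemp
          rw [Set.not_nonempty_iff_eq_empty] at hemp
          have : ∀ n : ℕ, ν x (Set.Ioc b (b + (n+1))) = 0 := by
            intro n
            by_contra hz
            have : (b + (n+1)) ∈ {t | 0 < ν x (Set.Ioc b t)} :=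
              lt_of_le_of_ne zero_le (Ne.symm hz)
            rw [hemp] at this
            exact this
          rw [measure_iUnion_null this] at hc
          exact lt_irrefl 0 hc
        have hbl : ∀ t ∈ {t | 0 < ν x (Set.Ioc b t)}, b ≤ t := by
          intro t ht
          simp only [Set.mem_setOf_eq] at ht
          by_contra hlt
          push_neg at hlt
          rw [Set.Ioc_eq_empty (fun hcc => absurd (le_of_lt hcc) (not_le.mpr hlt)),
            measure_empty] at ht
          exact lt_irrefl 0 ht
        constructor
        · intro h
          obtain ⟨t, ht, hta⟩ := (csInf_lt_iff ⟨b, hbl⟩ hne).mp h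
          obtain ⟨q, hq1, hq2⟩ := exists_rat_btwn hta
          exact Or.inl ⟨hc, q, hq2, lt_of_lt_of_le ht (measure_mono
            (Set.Ioc_subset_Ioc_right hq1.le))⟩
        · rintro (⟨_, q, hq, hx⟩ | ⟨hnc, _⟩)
          · exact lt_of_le_of_lt (csInf_le ⟨b, hbl⟩ hx) hq
          · exact absurd hc hnc
      · have hemp : {t | 0 < ν x (Set.Ioc b t)} = ∅ := by
          ext t
          simp only [Set.mem_setOf_eq, Set.mem_empty_iff_false, iff_false, not_lt]
          refine le_trans (measure_mono Set.Ioc_subset_Ioi_self) ?_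
          exact le_of_eq (by rw [not_lt, le_zero_iff] at hc; exact hc)
        rw [hemp, Real.sInf_empty]
        constructor
        · intro h; exact Or.inr ⟨hc, h⟩
        · rintro (⟨hcc, _⟩ | ⟨_, h⟩)
          · exact absurd hcc hc
          · exact h
    have hpre : (fun x => sInf {t | 0 < ν x (Set.Ioc (rSeq (ν x) k) t)}) ⁻¹' Set.Iio a =
        ({x | 0 < ν x (Set.Ioi (rSeq (ν x) k))} ∩
          ⋃ (q : ℚ), ⋃ (_ : (q:ℝ) < a), {x | 0 < ν x (Set.Ioc (rSeq (ν x) k) (q:ℝ))}) ∪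
        ({x | 0 < ν x (Set.Ioi (rSeq (ν x) k))}ᶜ ∩ {_x : α | 0 < a}) := by
      ext x
      simp only [Set.mem_preimage, Set.mem_Iio, Set.mem_union, Set.mem_inter_iff,
        Set.mem_compl_iff, Set.mem_iUnion, Set.mem_setOf_eq, exists_prop]
      rw [hkey x]
    rw [hpre]
    refine MeasurableSet.union ?_ ?_
    · exact hC.inter (MeasurableSet.iUnion fun q => MeasurableSet.iUnion fun _ =>
        measurableSet_lt measurable_const (measurable_nu_Ioc ν hνm hνp ihk measurable_const))
    · exact hC.compl.inter (MeasurableSet.const _)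

include hνm hνp in
lemma measurable_wSeq (hν₂ : ∀ x, ν x (Set.Iio (-2)) = 0) (hν₂' : ∀ x, ν x (Set.Ioi 2) = 0)
    (k : ℕ) : Measurable fun x => wSeq (ν x) k := by
  cases k with
  | zero =>
    simp_rw [show ∀ x, wSeq (ν x) 0 = ν x (Set.Iic (rSeq (ν x) 0)) from fun x => rfl]
    exact measurable_nu_Iic ν hνm hνp (measurable_rSeq ν hνm hνp hν₂ hν₂' 0)
  | succ k =>
    simp_rw [show ∀ x, wSeq (ν x) (k+1) = ν x (Set.Ioc (rSeq (ν x) k) (rSeq (ν x) (k+1)))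
      from fun x => rfl]
    exact measurable_nu_Ioc ν hνm hνp (measurable_rSeq ν hνm hνp hν₂ hν₂' k)
      (measurable_rSeq ν hνm hνp hν₂ hν₂' (k+1))

end Meas


section MapSum

lemma map_sum_smul_dirac {β : Type*} [MeasurableSpace β] {g : ℝ → β} (hg : Measurable g)
    (w : ℕ → ℝ≥0∞) (r : ℕ → ℝ) (m : ℕ) :
    Measure.map g (∑ k ∈ Finset.range m, w k • Measure.dirac (r k)) =
      ∑ k ∈ Finset.range m, w k • Measure.dirac (g (r k)) := by
  induction m with
  | zero => simp
  | succ m ih =>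
    rw [Finset.sum_range_succ, Finset.sum_range_succ, Measure.map_add _ _ hg, ih,
      Measure.map_smul, Measure.map_dirac' hg]

end MapSum

end Stmt14Aux

open Stmt14Aux

/-- main theorem: under the `m`-twist condition on `c`-splitting sets,
with `μ₁` non-atomic and a dual solution `(φ₀, φ)` with `φ₀` differentiable `μ₁`-a.e.,
every optimal plan `γ` decomposes as `γ = ∑_{i<k} αᵢ (Id × Gᵢ)₃μ₁` with `k ≤ m`,
`αᵢ ≥ 0` measurable summing to `1` a.e., and Borel maps `Gᵢ`. -/
theorem stmt_14 {d n m : ℕ} {Y : Fin n → Type*}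
    [∀ i, MetricSpace (Y i)] [∀ i, PolishSpace (Y i)]
    [∀ i, MeasurableSpace (Y i)] [∀ i, BorelSpace (Y i)]
    (X₁ : Set (EuclideanSpace ℝ (Fin d))) (hX₁ : IsCompact X₁)
    (μ₁ : Measure (EuclideanSpace ℝ (Fin d))) [IsProbabilityMeasure μ₁]
    (hμ₁X : μ₁ X₁ = 1) (hna : ∀ x, μ₁ {x} = 0)
    (μ : ∀ i, Measure (Y i)) (hμ : ∀ i, IsProbabilityMeasure (μ i))
    (c : EuclideanSpace ℝ (Fin d) → (∀ i, Y i) → ℝ)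
    (hc : Continuous fun p : EuclideanSpace ℝ (Fin d) × (∀ i, Y i) => c p.1 p.2)
    (hcb : ∃ M, ∀ x y, |c x y| ≤ M)
    (D₁c : EuclideanSpace ℝ (Fin d) → (∀ i, Y i) → (EuclideanSpace ℝ (Fin d) →L[ℝ] ℝ))
    (hD : ∀ x y, HasFDerivAt (fun x' => c x' y) (D₁c x y) x)
    -- the `m`-twist condition on `c`-splitting sets:
    (htwist : ∀ (S : Set (EuclideanSpace ℝ (Fin d) × (∀ i, Y i)))
      (u₀ : EuclideanSpace ℝ (Fin d) → ℝ) (u : ∀ i, Y i → ℝ),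
      (∀ x y, u₀ x + ∑ i, u i (y i) ≤ c x y) →
      (∀ p ∈ S, u₀ p.1 + ∑ i, u i (p.2 i) = c p.1 p.2) →
      ∀ p ∈ S, {y : ∀ i, Y i | (p.1, y) ∈ S ∧ D₁c p.1 y = D₁c p.1 p.2}.Finite ∧
        {y : ∀ i, Y i | (p.1, y) ∈ S ∧ D₁c p.1 y = D₁c p.1 p.2}.ncard ≤ m)
    -- `γ` is an optimal plan:
    (γ : Measure (EuclideanSpace ℝ (Fin d) × (∀ i, Y i))) [IsProbabilityMeasure γ]
    (hγ₁ : Measure.map Prod.fst γ = μ₁)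
    (hγ₂ : ∀ i, Measure.map (fun p => p.2 i) γ = μ i)
    (hopt : ∀ π : Measure (EuclideanSpace ℝ (Fin d) × (∀ i, Y i)),
      IsProbabilityMeasure π → Measure.map Prod.fst π = μ₁ →
      (∀ i, Measure.map (fun p => p.2 i) π = μ i) →
      ∫ p, c p.1 p.2 ∂γ ≤ ∫ p, c p.1 p.2 ∂π)
    -- the Kantorovich dual problem admits a solution `(φ₀, φ)`:
    (φ₀ : EuclideanSpace ℝ (Fin d) → ℝ) (φ : ∀ i, Y i → ℝ)
    (hφ₀m : Measurable φ₀) (hφm : ∀ i, Measurable (φ i))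
    (hφ₀int : Integrable φ₀ μ₁) (hφint : ∀ i, Integrable (φ i) (μ i))
    (hφ₀diff : ∀ᵐ x ∂μ₁, DifferentiableAt ℝ φ₀ x)
    (hdle : ∀ x y, φ₀ x + ∑ i, φ i (y i) ≤ c x y)
    (hdual : ∫ p, c p.1 p.2 ∂γ = ∫ x, φ₀ x ∂μ₁ + ∑ i, ∫ yi, φ i yi ∂(μ i)) :
    ∃ k : ℕ, k ≤ m ∧
      ∃ (α : Fin k → EuclideanSpace ℝ (Fin d) → ℝ)
        (G : Fin k → EuclideanSpace ℝ (Fin d) → ∀ i, Y i),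
        (∀ i, Measurable (α i)) ∧ (∀ i x, 0 ≤ α i x) ∧
        (∀ᵐ x ∂μ₁, ∑ i, α i x = 1) ∧
        (∀ i, Measurable (G i)) ∧
        γ = ∑ i : Fin k,
          Measure.map (fun x => (x, G i x))
            (μ₁.withDensity fun x => ENNReal.ofReal (α i x)) := by
  classical
  obtain ⟨M, hM⟩ := hcb
  -- nonemptiness of the target space
  have hYne : ∀ i, Nonempty (Y i) := by
    intro i
    rcases isEmpty_or_nonempty (Y i) with h | h
    · exfalso
      haveI := hμ i
      have h1 : (μ i) Set.univ = 1 := measure_univ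
      rw [Set.univ_eq_empty_iff.mpr h, measure_empty] at h1
      exact zero_ne_one h1
    · exact h
  haveI : Nonempty (∀ i, Y i) := ⟨fun i => Classical.arbitrary _⟩
  -- measurable embedding into (-2, 2) ⊆ ℝ
  obtain ⟨e, he⟩ := exists_measurableEmbedding_real (∀ i, Y i)
  set e₂ : (∀ i, Y i) → ℝ := fun y => Real.arctan (e y) with he₂def
  have he₂m : Measurable e₂ := Real.measurable_arctan.comp he.measurable
  have he₂i : Function.Injective e₂ := fun a b hab =>
    he.injective (Real.arctan_injective hab)
  obtain ⟨gext, hgm, hge⟩ := (he₂m.measurableEmbedding he₂i).exists_measurable_extend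
    measurable_id (fun _ => inferInstance)
  -- the disintegration kernel and its image measures on ℝ
  have hfst : γ.fst = μ₁ := hγ₁
  set ν : EuclideanSpace ℝ (Fin d) → Measure ℝ :=
    fun x => (γ.condKernel x).map e₂ with hνdef
  have hνm : ∀ s : Set ℝ, MeasurableSet s → Measurable fun x => ν x s := by
    intro s hs
    simp_rw [hνdef, Measure.map_apply he₂m hs]
    exact ProbabilityTheory.Kernel.measurable_coe γ.condKernel (he₂m hs)
  have hκp : ∀ x, IsProbabilityMeasure (γ.condKernel x) := fun x => inferInstance
  have hνp : ∀ x, ν x Set.univ = 1 := by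
    intro x
    haveI := hκp x
    rw [hνdef, Measure.map_apply he₂m MeasurableSet.univ, Set.preimage_univ]
    exact measure_univ
  have he₂bnd : ∀ y, -2 < e₂ y ∧ e₂ y < 2 := by
    intro y
    have h1 := Real.neg_pi_div_two_lt_arctan (e y)
    have h2 := Real.arctan_lt_pi_div_two (e y)
    have h3 := Real.pi_lt_d2
    constructor <;> [nlinarith; nlinarith]
  have hνlow : ∀ x, ν x (Set.Iio (-2)) = 0 := by
    intro x
    rw [hνdef, Measure.map_apply he₂m measurableSet_Iio]
    have : e₂ ⁻¹' (Set.Iio (-2)) = ∅ := by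
      ext y
      simp only [Set.mem_preimage, Set.mem_Iio, Set.mem_empty_iff_false, iff_false, not_lt]
      exact (he₂bnd y).1.le
    rw [this, measure_empty]
  have hνhigh : ∀ x, ν x (Set.Ioi 2) = 0 := by
    intro x
    rw [hνdef, Measure.map_apply he₂m measurableSet_Ioi]
    have : e₂ ⁻¹' (Set.Ioi 2) = ∅ := by
      ext y
      simp only [Set.mem_preimage, Set.mem_Ioi, Set.mem_empty_iff_false, iff_false, not_lt]
      exact (he₂bnd y).2.le
    rw [this, measure_empty]
  have hwle : ∀ x k, wSeq (ν x) k ≤ 1 := by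
    intro x k
    have h1 : ν x Set.univ = 1 := hνp x
    cases k with
    | zero => rw [wSeq_zero, ← h1]; exact measure_mono (Set.subset_univ _)
    | succ k => rw [wSeq_succ, ← h1]; exact measure_mono (Set.subset_univ _)
  have hwne : ∀ x k, wSeq (ν x) k ≠ ⊤ :=
    fun x k => ne_top_of_le_ne_top ENNReal.one_ne_top (hwle x k)
  -- the contact set
  set S : Set ((EuclideanSpace ℝ (Fin d)) × (∀ i, Y i)) :=
    {p | φ₀ p.1 + ∑ i, φ i (p.2 i) = c p.1 p.2} with hSdef
  have hSm : MeasurableSet S := by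
    refine measurableSet_eq_fun ?_ hc.measurable
    exact (hφ₀m.comp measurable_fst).add
      (Finset.measurable_sum _ fun i _ =>
        (hφm i).comp ((measurable_pi_apply i).comp measurable_snd))
  -- measurability of the derivative map
  have hD1meas : ∀ w, Measurable fun p : (EuclideanSpace ℝ (Fin d)) × (∀ i, Y i) =>
      D₁c p.1 p.2 w := by
    intro w
    have hnorm : Filter.Tendsto (fun n : ℕ => ‖((n : ℝ))‖) Filter.atTop Filter.atTop := by
      simp only [Real.norm_natCast]
      exact tendsto_natCast_atTop_atTop
    have hlim : Filter.Tendsto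
        (fun (n : ℕ) (p : (EuclideanSpace ℝ (Fin d)) × (∀ i, Y i)) =>
          (n : ℝ) • (c (p.1 + ((n : ℝ))⁻¹ • w) p.2 - c p.1 p.2))
        Filter.atTop (nhds (fun p => D₁c p.1 p.2 w)) := by
      rw [tendsto_pi_nhds]
      intro p
      exact (hD p.1 p.2).lim w hnorm
    refine measurable_of_tendsto_metrizable (fun n => ?_) hlim
    have hcont : Continuous fun p : (EuclideanSpace ℝ (Fin d)) × (∀ i, Y i) =>
        (n : ℝ) • (c (p.1 + ((n : ℝ))⁻¹ • w) p.2 - c p.1 p.2) := by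
      refine continuous_const.fun_smul (Continuous.fun_sub ?_ hc)
      exact hc.comp (((continuous_fst.add continuous_const)).prodMk continuous_snd)
    exact hcont.measurable
  set Dset : Set ((EuclideanSpace ℝ (Fin d)) × (∀ i, Y i)) :=
    {p | D₁c p.1 p.2 = fderiv ℝ φ₀ p.1} with hDdef
  have hDm : MeasurableSet Dset := by
    have hbasis : Dset = ⋂ j : Fin d, {p : (EuclideanSpace ℝ (Fin d)) × (∀ i, Y i) |
        D₁c p.1 p.2 (EuclideanSpace.single j 1) =
          fderiv ℝ φ₀ p.1 (EuclideanSpace.single j 1)} := by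
      ext p
      simp only [hDdef, Set.mem_setOf_eq, Set.mem_iInter]
      constructor
      · intro h j; rw [h]
      · intro h
        have hlin : (D₁c p.1 p.2 : EuclideanSpace ℝ (Fin d) →ₗ[ℝ] ℝ) =
            (fderiv ℝ φ₀ p.1 : EuclideanSpace ℝ (Fin d) →ₗ[ℝ] ℝ) := by
          refine Module.Basis.ext ((EuclideanSpace.basisFun (Fin d) ℝ).toBasis) fun j => ?_
          rw [OrthonormalBasis.coe_toBasis, EuclideanSpace.basisFun_apply]
          exact h j
        exact ContinuousLinearMap.coe_injective hlin
    rw [hbasis]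
    exact MeasurableSet.iInter fun j => measurableSet_eq_fun (hD1meas _)
      ((measurable_fderiv_apply_const ℝ φ₀ _).comp measurable_fst)
  -- integrability
  have hint_c : Integrable (fun p : (EuclideanSpace ℝ (Fin d)) × (∀ i, Y i) =>
      c p.1 p.2) γ := by
    refine Integrable.mono' (integrable_const M) hc.measurable.aestronglyMeasurable ?_
    exact Filter.Eventually.of_forall fun p => by
      simpa [Real.norm_eq_abs] using hM p.1 p.2
  have hint_0 : Integrable (fun p : (EuclideanSpace ℝ (Fin d)) × (∀ i, Y i) =>
      φ₀ p.1) γ := by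
    have h := hφ₀int
    rw [← hγ₁] at h
    exact (integrable_map_measure hφ₀m.aestronglyMeasurable
      measurable_fst.aemeasurable).mp h
  have hint_i : ∀ i, Integrable (fun p : (EuclideanSpace ℝ (Fin d)) × (∀ i, Y i) =>
      φ i (p.2 i)) γ := by
    intro i
    have h := hφint i
    rw [← hγ₂ i] at h
    exact (integrable_map_measure (hφm i).aestronglyMeasurable
      ((measurable_pi_apply i).comp measurable_snd).aemeasurable).mp h
  have hint_sum : Integrable (fun p : (EuclideanSpace ℝ (Fin d)) × (∀ i, Y i) =>
      ∑ i, φ i (p.2 i)) γ := integrable_finset_sum _ fun i _ => hint_i i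
  -- a.e. membership in S
  have hae_S : ∀ᵐ p ∂γ, p ∈ S := by
    have hf0 : 0 ≤ fun p : (EuclideanSpace ℝ (Fin d)) × (∀ i, Y i) =>
        c p.1 p.2 - (φ₀ p.1 + ∑ i, φ i (p.2 i)) :=
      fun p => sub_nonneg.mpr (hdle p.1 p.2)
    have hfint : Integrable (fun p : (EuclideanSpace ℝ (Fin d)) × (∀ i, Y i) =>
        c p.1 p.2 - (φ₀ p.1 + ∑ i, φ i (p.2 i))) γ := hint_c.sub (hint_0.add hint_sum)
    have h0 : ∫ p, φ₀ p.1 ∂γ = ∫ x, φ₀ x ∂μ₁ := by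
      rw [← hγ₁, integral_map measurable_fst.aemeasurable hφ₀m.aestronglyMeasurable]
    have hi : ∀ i, ∫ p, φ i (p.2 i) ∂γ = ∫ y, φ i y ∂(μ i) := fun i => by
      rw [← hγ₂ i, integral_map (show Measurable fun p :
          (EuclideanSpace ℝ (Fin d)) × (∀ i, Y i) => p.2 i from
          (measurable_pi_apply i).comp measurable_snd).aemeasurable
        (hφm i).aestronglyMeasurable]
    have hfint0 : ∫ p, (c p.1 p.2 - (φ₀ p.1 + ∑ i, φ i (p.2 i))) ∂γ = 0 := by
      have hsplit : ∫ p, (c p.1 p.2 - (φ₀ p.1 + ∑ i, φ i (p.2 i))) ∂γ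
          = ∫ p, c p.1 p.2 ∂γ - ∫ p, (φ₀ p.1 + ∑ i, φ i (p.2 i)) ∂γ :=
        integral_sub hint_c (hint_0.add hint_sum)
      have hadd : ∫ p, (φ₀ p.1 + ∑ i, φ i (p.2 i)) ∂γ
          = ∫ p, φ₀ p.1 ∂γ + ∫ p, (∑ i, φ i (p.2 i)) ∂γ := integral_add hint_0 hint_sum
      have hsum2 : ∫ p, (∑ i, φ i (p.2 i)) ∂γ = ∑ i, ∫ p, φ i (p.2 i) ∂γ :=
        integral_finset_sum _ fun i _ => hint_i i
      rw [hsplit, hadd, hsum2, h0, Finset.sum_congr rfl fun i _ => hi i, hdual]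
      ring
    have := (integral_eq_zero_iff_of_nonneg hf0 hfint).mp hfint0
    filter_upwards [this] with p hp
    have hp' : c p.1 p.2 - (φ₀ p.1 + ∑ i, φ i (p.2 i)) = 0 := hp
    simp only [hSdef, Set.mem_setOf_eq]
    linarith
  -- a.e. differentiability
  have hae_diff : ∀ᵐ p ∂γ, DifferentiableAt ℝ φ₀ p.1 := by
    have h := hφ₀diff
    rw [← hγ₁] at h
    exact (ae_map_iff measurable_fst.aemeasurable
      (measurableSet_of_differentiableAt ℝ φ₀)).mp h
  -- a.e. membership in S ∩ Dset
  have hae_S' : ∀ᵐ p ∂γ, p ∈ S ∩ Dset := by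
    filter_upwards [hae_S, hae_diff] with p hpS hpd
    refine ⟨hpS, ?_⟩
    have hmax : IsLocalMax (fun x => φ₀ x - c x p.2) p.1 := by
      refine Filter.Eventually.of_forall fun x => ?_
      have h1 := hdle x p.2
      have h2 : φ₀ p.1 + ∑ i, φ i (p.2 i) = c p.1 p.2 := hpS
      simp only
      linarith
    have hder : HasFDerivAt (fun x => φ₀ x - c x p.2)
        (fderiv ℝ φ₀ p.1 - D₁c p.1 p.2) p.1 := (hpd.hasFDerivAt).sub (hD p.1 p.2)
    have hzero := hmax.hasFDerivAt_eq_zero hder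
    have : fderiv ℝ φ₀ p.1 = D₁c p.1 p.2 := by
      rwa [sub_eq_zero] at hzero
    exact this.symm
  have hS'm : MeasurableSet (S ∩ Dset) := hSm.inter hDm
  have hγS' : γ (S ∩ Dset) = 1 := by
    have h0 : γ (S ∩ Dset)ᶜ = 0 := ae_iff.mp hae_S'
    rwa [prob_compl_eq_zero_iff hS'm] at h0
  -- a.e. fullness of fibers
  have hker : (1 : ℝ≥0∞) = ∫⁻ x, γ.condKernel x (Prod.mk x ⁻¹' (S ∩ Dset)) ∂μ₁ := by
    conv_lhs => rw [← hγS', ← γ.disintegrate γ.condKernel]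
    rw [Measure.compProd_apply hS'm, hfst]
  have haefull : ∀ᵐ x ∂μ₁, γ.condKernel x (Prod.mk x ⁻¹' (S ∩ Dset)) = 1 := by
    have hfm : Measurable fun x => γ.condKernel x (Prod.mk x ⁻¹' (S ∩ Dset)) :=
      ProbabilityTheory.Kernel.measurable_kernel_prodMk_left hS'm
    have hle : ∀ x, γ.condKernel x (Prod.mk x ⁻¹' (S ∩ Dset)) ≤ 1 := by
      intro x
      haveI := hκp x
      exact prob_le_one
    have hsub : ∫⁻ x, (1 - γ.condKernel x (Prod.mk x ⁻¹' (S ∩ Dset))) ∂μ₁ = 0 := by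
      rw [lintegral_sub hfm (by rw [← hker]; exact ENNReal.one_ne_top)
        (Filter.Eventually.of_forall hle), lintegral_one, measure_univ, ← hker, tsub_self]
    have := (lintegral_eq_zero_iff (measurable_const.sub hfm)).mp hsub
    filter_upwards [this] with x hx
    have hx' : 1 - γ.condKernel x (Prod.mk x ⁻¹' (S ∩ Dset)) = 0 := hx
    exact le_antisymm (hle x) (tsub_eq_zero_iff_le.mp hx')
  -- the good-points statement
  have hgood : ∀ᵐ x ∂μ₁,
      (γ.condKernel x = ∑ k ∈ Finset.range m,
        wSeq (ν x) k • Measure.dirac (gext (rSeq (ν x) k))) ∧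
      (∑ k ∈ Finset.range m, (wSeq (ν x) k).toReal = 1) := by
    filter_upwards [haefull] with x hx
    haveI := hκp x
    set T : Set (∀ i, Y i) := Prod.mk x ⁻¹' (S ∩ Dset) with hTdef
    have hTm : MeasurableSet T := measurable_prodMk_left hS'm
    have hTne : T.Nonempty := nonempty_of_measure_ne_zero (by rw [hx]; exact one_ne_zero)
    obtain ⟨y₀, hy₀⟩ := hTne
    have htw := htwist S φ₀ φ hdle (fun p hp => hp) (x, y₀) hy₀.1
    have hTeq : {y | ((x, y₀).1, y) ∈ S ∧ D₁c (x, y₀).1 y = D₁c (x, y₀).1 (x, y₀).2} = T := by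
      have h2 : D₁c x y₀ = fderiv ℝ φ₀ x := hy₀.2
      ext y
      simp only [Set.mem_setOf_eq, hTdef, Set.mem_preimage, Set.mem_inter_iff, h2]
      exact Iff.rfl
    rw [hTeq] at htw
    obtain ⟨hTfin, hTcard⟩ := htw
    haveI : IsFiniteMeasure (ν x) := ⟨by rw [hνp x]; exact ENNReal.one_lt_top⟩
    -- concentration on the image of T
    have hκTc : γ.condKernel x Tᶜ = 0 := by
      rw [measure_compl hTm (measure_ne_top _ _), hx, measure_univ, tsub_self]
    have hconcB : ν x (e₂ '' T)ᶜ = 0 := by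
      rw [hνdef, Measure.map_apply he₂m ((hTfin.image e₂).measurableSet).compl]
      refine measure_mono_null ?_ hκTc
      intro y hy
      simp only [Set.mem_preimage, Set.mem_compl_iff] at hy ⊢
      exact fun hT => hy (Set.mem_image_of_mem e₂ hT)
    have hA_sub : {t | 0 < ν x {t}} ⊆ e₂ '' T := by
      intro t ht
      by_contra hmem
      have h0 : ν x {t} = 0 :=
        measure_mono_null (by simpa using hmem) hconcB
      rw [Set.mem_setOf_eq, h0] at ht
      exact lt_irrefl 0 ht
    have hAfin : {t | 0 < ν x {t}}.Finite := (hTfin.image e₂).subset hA_sub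
    have hcard : {t | 0 < ν x {t}}.ncard ≤ m :=
      le_trans (Set.ncard_le_ncard hA_sub (hTfin.image e₂))
        (le_trans (Set.ncard_image_le hTfin) hTcard)
    have hconcA : ν x {t | 0 < ν x {t}}ᶜ = 0 := by
      have hcnt : ((e₂ '' T) \ {t | 0 < ν x {t}}).Countable :=
        ((hTfin.image e₂).subset Set.diff_subset).countable
      have h1 : ν x ((e₂ '' T) \ {t | 0 < ν x {t}}) = 0 := by
        rw [← Set.biUnion_of_singleton ((e₂ '' T) \ {t | 0 < ν x {t}})]
        refine (measure_biUnion_null_iff hcnt).mpr fun t ht => ?_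
        have h2 : ¬ 0 < ν x {t} := ht.2
        exact le_antisymm (not_lt.mp h2) zero_le
      have h2 : {t | 0 < ν x {t}}ᶜ ⊆ (e₂ '' T)ᶜ ∪ ((e₂ '' T) \ {t | 0 < ν x {t}}) := by
        intro t ht
        by_cases h : t ∈ e₂ '' T
        exacts [Or.inr ⟨h, ht⟩, Or.inl h]
      exact measure_mono_null h2 (measure_union_null hconcB h1)
    have henum := enum_eq m (ν x) inferInstance hconcA hAfin hcard m le_rfl
    have hκm2 : γ.condKernel x = Measure.map gext (ν x) := by
      rw [hνdef, Measure.map_map hgm he₂m, hge, Measure.map_id]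
    constructor
    · rw [hκm2]
      conv_lhs => rw [← henum]
      rw [map_sum_smul_dirac hgm]
    · have h1 : (∑ k ∈ Finset.range m, wSeq (ν x) k • Measure.dirac (rSeq (ν x) k))
          Set.univ = ν x Set.univ := by rw [henum]
      rw [Measure.finset_sum_apply] at h1
      simp only [Measure.smul_apply, measure_univ, smul_eq_mul, mul_one] at h1
      rw [hνp x] at h1
      have h2 : (∑ k ∈ Finset.range m, wSeq (ν x) k).toReal = 1 := by
        rw [h1]; rfl
      rw [← ENNReal.toReal_sum fun k _ => hwne x k]
      exact h2
  -- conclusion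
  refine ⟨m, le_rfl, fun i x => (wSeq (ν x) (i : ℕ)).toReal,
    fun i x => gext (rSeq (ν x) (i : ℕ)), ?_, ?_, ?_, ?_, ?_⟩
  · intro i
    exact (measurable_wSeq ν hνm hνp hνlow hνhigh (i : ℕ)).ennreal_toReal
  · intro i x
    exact ENNReal.toReal_nonneg
  · filter_upwards [hgood] with x hx
    rw [Fin.sum_univ_eq_sum_range (fun k => (wSeq (ν x) k).toReal) m]
    exact hx.2
  · intro i
    exact hgm.comp (measurable_rSeq ν hνm hνp hνlow hνhigh (i : ℕ))
  · -- the measure identity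
    have hofReal : ∀ k : ℕ, (fun x => ENNReal.ofReal ((wSeq (ν x) k).toReal)) =
        fun x => wSeq (ν x) k :=
      fun k => funext fun x => ENNReal.ofReal_toReal (hwne x k)
    ext s hs
    have hsec : ∀ x : EuclideanSpace ℝ (Fin d), MeasurableSet (Prod.mk x ⁻¹' s) :=
      fun x => measurable_prodMk_left hs
    have hGm : ∀ k : ℕ, Measurable fun x : EuclideanSpace ℝ (Fin d) =>
        (x, gext (rSeq (ν x) k)) :=
      fun k => measurable_id.prodMk (hgm.comp (measurable_rSeq ν hνm hνp hνlow hνhigh k))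
    have hpre : ∀ k : ℕ, MeasurableSet ((fun x : EuclideanSpace ℝ (Fin d) =>
        (x, gext (rSeq (ν x) k))) ⁻¹' s) := fun k => (hGm k) hs
    calc γ s = (γ.fst.compProd γ.condKernel) s := by rw [γ.disintegrate γ.condKernel]
    _ = ∫⁻ x, γ.condKernel x (Prod.mk x ⁻¹' s) ∂μ₁ := by
        rw [Measure.compProd_apply hs, hfst]
    _ = ∫⁻ x, ∑ k ∈ Finset.range m, Set.indicator
        ((fun x => (x, gext (rSeq (ν x) k))) ⁻¹' s) (fun x => wSeq (ν x) k) x ∂μ₁ := by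
        refine lintegral_congr_ae ?_
        filter_upwards [hgood] with x hx
        rw [hx.1, Measure.finset_sum_apply]
        refine Finset.sum_congr rfl fun k _ => ?_
        rw [Measure.smul_apply, Measure.dirac_apply' _ (hsec x)]
        by_cases hmem : (x, gext (rSeq (ν x) k)) ∈ s
        · rw [Set.indicator_of_mem (show gext (rSeq (ν x) k) ∈ Prod.mk x ⁻¹' s from hmem),
            Set.indicator_of_mem (show x ∈ _ from hmem)]
          simp
        · rw [Set.indicator_of_notMem
            (show gext (rSeq (ν x) k) ∉ Prod.mk x ⁻¹' s from hmem),
            Set.indicator_of_notMem (show x ∉ _ from hmem)]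
          simp
    _ = ∑ k ∈ Finset.range m, ∫⁻ x, Set.indicator
        ((fun x => (x, gext (rSeq (ν x) k))) ⁻¹' s) (fun x => wSeq (ν x) k) x ∂μ₁ := by
        refine lintegral_finset_sum _ fun k _ => ?_
        exact (measurable_wSeq ν hνm hνp hνlow hνhigh k).indicator (hpre k)
    _ = ∑ k ∈ Finset.range m, (Measure.map (fun x => (x, gext (rSeq (ν x) k)))
        (μ₁.withDensity fun x => wSeq (ν x) k)) s := by
        refine Finset.sum_congr rfl fun k _ => ?_
        rw [Measure.map_apply (hGm k) hs, withDensity_apply _ (hpre k),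
          ← lintegral_indicator (hpre k)]
    _ = (∑ i : Fin m, Measure.map (fun x => (x, gext (rSeq (ν x) (i : ℕ))))
        (μ₁.withDensity fun x => ENNReal.ofReal ((wSeq (ν x) (i : ℕ)).toReal))) s := by
        rw [Measure.finset_sum_apply,
          Fin.sum_univ_eq_sum_range (fun k => (Measure.map (fun x =>
            (x, gext (rSeq (ν x) k))) (μ₁.withDensity fun x =>
              ENNReal.ofReal ((wSeq (ν x) k).toReal))) s) m]
        refine Finset.sum_congr rfl fun k _ => ?_
        rw [hofReal k]
end
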